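/- arXiv:1502.06989 — 5 statements merged into one kernel-verified Lean document; each statement's English description precedes it below -/
import Mathlib

section
/- Let k be a field of characteristic 0 and let C be an EI category with object set ℕ satisfying the standing conditions. Then every finite-dimensional C-module V admits a finite injective resolution with finite-dimensional terms: there is an exact sequence 0 → V → I^0 → I^1 → ⋯ → I^m → 0 of C-modules in which each I^j is finite dimensional and injective. -/
open CategoryTheory CategoryTheory.Limits

attribute [local instance] CategoryTheory.Abelian.hasFiniteBiproducts

section EI

variable [Category.{0} ℕ]

/-- The standing conditions on the category `C` (whose set of objects is `ℕ`):
every endomorphism is an isomorphism (`C` is an EI category); `C(m,n) = ∅` when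
`m > n`; `C(m,n)` is a nonempty finite set when `m ≤ n`; and for `m ≤ l ≤ n` the
composition map `C(l,n) × C(m,l) → C(m,n)` is surjective. -/
def EIStanding : Prop :=
  (∀ (n : ℕ) (f : n ⟶ n), IsIso f) ∧
  (∀ ⦃m n : ℕ⦄, n < m → IsEmpty (m ⟶ n)) ∧
  (∀ ⦃m n : ℕ⦄, m ≤ n → Nonempty (m ⟶ n)) ∧
  (∀ m n : ℕ, Finite (m ⟶ n)) ∧
  (∀ ⦃m l n : ℕ⦄, m ≤ l → l ≤ n → ∀ h : m ⟶ n, ∃ (g : m ⟶ l) (f : l ⟶ n), g ≫ f = h)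

/-- The free `C`-module `kC e_n`, sending `m` to the free `k`-module on the
hom-set `C(n, m)`. -/
noncomputable def EIfree (k : Type) [CommRing k] (n : ℕ) : ℕ ⥤ ModuleCat k :=
  coyoneda.obj (Opposite.op n) ⋙ ModuleCat.free k

/-- A `C`-module is finitely generated if it admits an epimorphism from a finite
direct sum `⨁ᵢ kC e_{nᵢ}` of free modules. -/
noncomputable def EIFinGen (k : Type) [CommRing k] (V : ℕ ⥤ ModuleCat k) : Prop :=
  ∃ (r : ℕ) (a : Fin r → ℕ) (p : (⨁ fun i : Fin r => EIfree k (a i)) ⟶ V), Epi p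

/-- `C` is locally Noetherian over `k`: every subfunctor of a finitely generated
`C`-module is finitely generated, i.e. the source of any monomorphism into a
finitely generated `C`-module is finitely generated. -/
noncomputable def EILocNoeth (k : Type) [CommRing k] : Prop :=
  ∀ (V W : ℕ ⥤ ModuleCat k) (f : W ⟶ V), Mono f → EIFinGen k V → EIFinGen k W

/-- The full subcategory `C_n` of `C` on the objects `{0, 1, …, n}`. -/
abbrev EIsub (n : ℕ) := ObjectProperty.FullSubcategory (fun m : ℕ => m ≤ n)

/-- A `C`-module (resp. `C_n`-module) is finite dimensional over a field `k` if
all its values are finite dimensional and all but finitely many vanish. -/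
def EIFinDim (k : Type) [Field k] (V : ℕ ⥤ ModuleCat k) : Prop :=
  (∀ m : ℕ, Module.Finite k (V.obj m)) ∧ ∃ N : ℕ, ∀ m : ℕ, N < m → IsZero (V.obj m)

/-- `C` satisfies the transitivity condition: for each `n`, the group `C(n+1,n+1)`
acts transitively on `C(n,n+1)` by postcomposition. -/
def EITransitive : Prop :=
  ∀ (n : ℕ) (f g : (n : ℕ) ⟶ (n + 1 : ℕ)), ∃ h : (n + 1 : ℕ) ⟶ (n + 1 : ℕ), f ≫ h = g

/-- `0` is an initial object of `C`: `C(0,n)` is a singleton for every `n`. -/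
def EIInitialZero : Prop :=
  ∀ n : ℕ, Nonempty ((0 : ℕ) ⟶ n) ∧ Subsingleton ((0 : ℕ) ⟶ n)

end EI

section EIProofDev

set_option linter.unusedSectionVars false
set_option linter.unusedVariables false

namespace EIProof
variable [Category.{0} ℕ] {k : Type} [Field k]

variable (k) in
/-- Submodule of equivariant functions `(m ⟶ n) → V(n)`. -/
def csub (V : ℕ ⥤ ModuleCat k) (n m : ℕ) : Submodule k ((m ⟶ n) → V.obj n) where
  carrier := {φ | ∀ (g : m ⟶ n) (h : n ⟶ n), φ (g ≫ h) = V.map h (φ g)}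
  add_mem' := by intro a b ha hb g h; simp [ha g h, hb g h]
  zero_mem' := by intro g h; simp
  smul_mem' := by intro c a ha g h; simp [ha g h]

variable (k) in
/-- Coinduction of `V(n)` (with its endomorphism action) from degree `n`. -/
def Coind (V : ℕ ⥤ ModuleCat k) (n : ℕ) : ℕ ⥤ ModuleCat k where
  obj m := ModuleCat.of k (csub k V n m)
  map {m m'} f := ModuleCat.ofHom (LinearMap.codRestrict (csub k V n m')
    ((LinearMap.funLeft k (V.obj n) (fun g : m' ⟶ n => f ≫ g)).comp (csub k V n m).subtype)
    (by
      intro φ g h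
      simpa [LinearMap.funLeft, Category.assoc] using φ.2 (f ≫ g) h))
  map_id m := by
    refine ModuleCat.hom_ext (LinearMap.ext fun φ => ?_)
    apply Subtype.ext
    funext g
    show φ.1 (𝟙 _ ≫ g) = φ.1 g
    rw [Category.id_comp]
  map_comp f f' := by
    refine ModuleCat.hom_ext (LinearMap.ext fun φ => ?_)
    apply Subtype.ext
    funext g
    show φ.1 ((_ ≫ _) ≫ g) = φ.1 (_ ≫ _ ≫ g)
    rw [Category.assoc]

@[simp] lemma Coind_map_val (V : ℕ ⥤ ModuleCat k) (n : ℕ) {m m' : ℕ} (f : m ⟶ m')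
    (φ : (Coind k V n).obj m) (g : m' ⟶ n) :
    (((Coind k V n).map f) φ).1 g = φ.1 (f ≫ g) := rfl

variable (k) in
/-- The canonical map `V ⟶ Coind V n`. -/
def psi (V : ℕ ⥤ ModuleCat k) (n : ℕ) : V ⟶ Coind k V n where
  app m := ModuleCat.ofHom (LinearMap.codRestrict (csub k V n m) (LinearMap.pi (fun g : m ⟶ n => (V.map g).hom))
    (by
      intro v g h
      show V.map (g ≫ h) v = V.map h (V.map g v)
      rw [V.map_comp]; rfl))
  naturality m m' f := by
    ext v
    apply Subtype.ext
    funext g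
    show V.map g (V.map f v) = V.map (f ≫ g) v
    rw [V.map_comp]; rfl

@[simp] lemma psi_app_val (V : ℕ ⥤ ModuleCat k) (n m : ℕ) (v : V.obj m) (g : m ⟶ n) :
    ((psi k V n).app m v).1 g = V.map g v := rfl

lemma alpha_val {X V : ℕ ⥤ ModuleCat k} {n : ℕ} (α : X ⟶ Coind k V n) {m : ℕ}
    (x : X.obj m) (g : m ⟶ n) :
    (α.app m x).1 g = (α.app n (X.map g x)).1 (𝟙 n) := by
  have h := α.naturality g
  have h2 : α.app n (X.map g x) = (Coind k V n).map g (α.app m x) := by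
    simpa only [CategoryTheory.comp_apply] using (ConcreteCategory.congr_hom h x)
  rw [h2]
  simp

/-- helper: subsingleton carrier from IsZero -/
lemma subsingleton_of_isZero {M : ModuleCat k} (h : IsZero M) : Subsingleton M := by
  refine ⟨fun a b => ?_⟩
  have h1 : (𝟙 M : M ⟶ M) = 0 := h.eq_of_src _ _
  have hz : ∀ x : M, x = 0 := fun x => by
    calc x = (𝟙 M : M ⟶ M) x := rfl
    _ = (0 : M ⟶ M) x := by rw [h1]
    _ = 0 := rfl
  rw [hz a, hz b]

lemma csub_subsingleton {V : ℕ ⥤ ModuleCat k} {n m : ℕ} (h : IsEmpty (m ⟶ n)) :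
    Subsingleton ((Coind k V n).obj m) := by
  refine ⟨fun a b => Subtype.ext (funext fun g => (h.false g).elim)⟩

theorem injective_Coind [CharZero k] (hC : EIStanding) (V : ℕ ⥤ ModuleCat k) (n : ℕ) :
    Injective (Coind k V n) := by
  obtain ⟨hIso, hEmpty, hNE, hFin, hSurj⟩ := hC
  constructor
  intro X Y α ι hι
  haveI : ∀ (h : n ⟶ n), IsIso h := fun h => hIso n h
  haveI : Finite (n ⟶ n) := hFin n n
  haveI : Fintype (n ⟶ n) := Fintype.ofFinite _
  have hcard : ((Fintype.card (n ⟶ n) : k)) ≠ 0 := by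
    have : Nonempty (n ⟶ n) := ⟨𝟙 n⟩
    exact Nat.cast_ne_zero.2 Fintype.card_ne_zero
  haveI : Mono (ι.app n) := inferInstance
  have hinj : Function.Injective (ι.app n) := (ModuleCat.mono_iff_injective _).1 inferInstance
  obtain ⟨r0, hr0⟩ := (ι.app n).hom.exists_leftInverse_of_injective
    (LinearMap.ker_eq_bot.2 hinj)
  -- the evaluation-at-identity functional
  let lamX : X.obj n →ₗ[k] V.obj n :=
    (LinearMap.proj (𝟙 n)).comp ((csub k V n n).subtype.comp (α.app n).hom)
  have lamX_def : ∀ x : X.obj n, lamX x = (α.app n x).1 (𝟙 n) := fun _ => rfl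
  have lamX_eqv : ∀ (h : n ⟶ n) (x : X.obj n), lamX (X.map h x) = V.map h (lamX x) := by
    intro h x
    have e1 : lamX (X.map h x) = (α.app n x).1 h := by
      rw [lamX_def, ← alpha_val α x h]
    have e2 := (α.app n x).2 (𝟙 n) h
    rw [Category.id_comp] at e2
    rw [e1, e2, lamX_def]
  let lamY : Y.obj n →ₗ[k] V.obj n :=
    (Fintype.card (n ⟶ n) : k)⁻¹ • ∑ h : (n ⟶ n),
      ((V.map (inv h)).hom.comp
        ((lamX.comp r0).comp (Y.map h).hom))
  have lamY_def : ∀ y : Y.obj n, lamY y = (Fintype.card (n ⟶ n) : k)⁻¹ •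
      ∑ h : (n ⟶ n), V.map (inv h) (lamX (r0 (Y.map h y))) := by
    intro y
    simp [lamY, LinearMap.sum_apply]
  have lamY_ext : ∀ x : X.obj n, lamY (ι.app n x) = lamX x := by
    intro x
    rw [lamY_def]
    have hterm : ∀ h : (n ⟶ n), V.map (inv h) (lamX (r0 (Y.map h (ι.app n x)))) = lamX x := by
      intro h
      have e1 : Y.map h (ι.app n x) = ι.app n (X.map h x) := by
        simpa only [CategoryTheory.comp_apply] using
          (ConcreteCategory.congr_hom (ι.naturality h) x).symm
      have e2 : r0 (ι.app n (X.map h x)) = X.map h x := DFunLike.congr_fun hr0 (X.map h x)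
      rw [e1, e2, lamX_eqv]
      have : V.map h ≫ V.map (inv h) = 𝟙 _ := by
        rw [← V.map_comp, IsIso.hom_inv_id, V.map_id]
      calc (V.map (inv h)) ((V.map h) (lamX x)) = (V.map h ≫ V.map (inv h)) (lamX x) := rfl
      _ = lamX x := by rw [this]; rfl
    rw [Finset.sum_congr rfl (fun h _ => hterm h), Finset.sum_const, Finset.card_univ]
    rw [← Nat.cast_smul_eq_nsmul k, smul_smul, inv_mul_cancel₀ hcard, one_smul]
  have lamY_eqv : ∀ (h₀ : n ⟶ n) (y : Y.obj n), lamY (Y.map h₀ y) = V.map h₀ (lamY y) := by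
    intro h₀ y
    rw [lamY_def, lamY_def, map_smul, map_sum]
    congr 1
    let e : (n ⟶ n) ≃ (n ⟶ n) :=
      ⟨fun h => h₀ ≫ h, fun h => inv h₀ ≫ h, fun h => by simp, fun h => by simp⟩
    rw [← Equiv.sum_comp e (fun h => V.map h₀ ((V.map (inv h)) (lamX (r0 ((Y.map h) y)))))]
    refine Finset.sum_congr rfl (fun h _ => ?_)
    have e1 : Y.map h (Y.map h₀ y) = Y.map (e h) y := by
      show _ = Y.map (h₀ ≫ h) y
      rw [Y.map_comp]; rfl
    rw [e1]
    show V.map (inv h) (lamX (r0 (Y.map (e h) y))) =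
      V.map h₀ (V.map (inv (h₀ ≫ h)) (lamX (r0 (Y.map (e h) y))))
    set w := lamX (r0 (Y.map (e h) y))
    have : V.map (inv (h₀ ≫ h)) ≫ V.map h₀ = V.map (inv h) := by
      rw [← V.map_comp]
      congr 1
      simp
    calc V.map (inv h) w = (V.map (inv (h₀ ≫ h)) ≫ V.map h₀) w := by rw [this]
    _ = V.map h₀ (V.map (inv (h₀ ≫ h)) w) := rfl
  have bprop : ∀ (m : ℕ) (y : Y.obj m),
      (LinearMap.pi (fun g : m ⟶ n => lamY.comp (Y.map g).hom)) y
        ∈ csub k V n m := by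
    intro m y g h
    show lamY (Y.map (g ≫ h) y) = V.map h (lamY (Y.map g y))
    rw [Y.map_comp]
    exact lamY_eqv h (Y.map g y)
  let bapp : ∀ m : ℕ, Y.obj m ⟶ (Coind k V n).obj m := fun m =>
    ModuleCat.ofHom (LinearMap.codRestrict (csub k V n m)
      (LinearMap.pi (fun g : m ⟶ n => lamY.comp (Y.map g).hom))
      (bprop m))
  have bnat : ∀ ⦃m m' : ℕ⦄ (f : m ⟶ m'), Y.map f ≫ bapp m' = bapp m ≫ (Coind k V n).map f := by
    intro m m' f
    ext y
    apply Subtype.ext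
    funext g
    show lamY (Y.map g (Y.map f y)) = lamY (Y.map (f ≫ g) y)
    rw [Y.map_comp]; rfl
  refine ⟨{ app := bapp, naturality := bnat }, ?_⟩
  ext m x
  apply Subtype.ext
  funext g
  show lamY (Y.map g (ι.app m x)) = (α.app m x).1 g
  have e1 : Y.map g (ι.app m x) = ι.app n (X.map g x) := by
    simpa only [CategoryTheory.comp_apply] using
      (ConcreteCategory.congr_hom (ι.naturality g) x).symm
  rw [e1, lamY_ext, alpha_val α x g, lamX_def]

variable (k) in
/-- Finite product of functors, concretely. -/
def PFun {r : ℕ} (F : Fin r → (ℕ ⥤ ModuleCat k)) : ℕ ⥤ ModuleCat k where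
  obj m := ModuleCat.of k (∀ i, (F i).obj m)
  map {m m'} f := ModuleCat.ofHom (LinearMap.pi (fun i => ((F i).map f).hom.comp (LinearMap.proj i)))
  map_id m := by
    refine ModuleCat.hom_ext (LinearMap.ext fun φ => ?_)
    funext i
    show (F i).map (𝟙 m) (φ i) = φ i
    rw [(F i).map_id]; rfl
  map_comp f f' := by
    refine ModuleCat.hom_ext (LinearMap.ext fun φ => ?_)
    funext i
    show (F i).map (f ≫ f') (φ i) = (F i).map f' ((F i).map f (φ i))
    rw [(F i).map_comp]; rfl

@[simp] lemma PFun_map_apply {r : ℕ} (F : Fin r → (ℕ ⥤ ModuleCat k)) {m m' : ℕ} (f : m ⟶ m')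
    (φ : (PFun k F).obj m) (i : Fin r) :
    ((PFun k F).map f φ : ∀ i, (F i).obj m') i = (F i).map f ((φ : ∀ i, (F i).obj m) i) := rfl

variable (k) in
/-- Projection onto the `i`-th factor. -/
def PFun.proj {r : ℕ} (F : Fin r → (ℕ ⥤ ModuleCat k)) (i : Fin r) : PFun k F ⟶ F i where
  app m := ModuleCat.ofHom (LinearMap.proj i)
  naturality m m' f := rfl

variable (k) in
/-- Lift a family of maps into the factors. -/
def PFun.lift {r : ℕ} {F : Fin r → (ℕ ⥤ ModuleCat k)} {Y : ℕ ⥤ ModuleCat k}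
    (β : ∀ i, Y ⟶ F i) : Y ⟶ PFun k F where
  app m := ModuleCat.ofHom (LinearMap.pi (fun i => ((β i).app m).hom))
  naturality m m' f := by
    ext y
    funext i
    show (β i).app m' (Y.map f y) = (F i).map f ((β i).app m y)
    simpa only [CategoryTheory.comp_apply] using
      ConcreteCategory.congr_hom ((β i).naturality f) y

@[simp] lemma PFun.lift_app_apply {r : ℕ} {F : Fin r → (ℕ ⥤ ModuleCat k)}
    {Y : ℕ ⥤ ModuleCat k} (β : ∀ i, Y ⟶ F i) (m : ℕ) (y : Y.obj m) (i : Fin r) :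
    ((PFun.lift k β).app m y : ∀ i, (F i).obj m) i = (β i).app m y := rfl

theorem PFun.injective {r : ℕ} (F : Fin r → (ℕ ⥤ ModuleCat k))
    (h : ∀ i, Injective (F i)) : Injective (PFun k F) := by
  constructor
  intro X Y α ι hι
  choose β hβ using fun i => (h i).factors (α ≫ PFun.proj k F i) ι
  refine ⟨PFun.lift k β, ?_⟩
  ext m x
  funext i
  show (β i).app m (ι.app m x) = (α.app m x) i
  have := ConcreteCategory.congr_hom (congrArg (fun t => NatTrans.app t m) (hβ i)) x
  simp only [NatTrans.comp_app, CategoryTheory.comp_apply] at this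
  exact this

theorem main [CharZero k] (hC : EIStanding) : ∀ (N : ℕ) (V : ℕ ⥤ ModuleCat k),
    (∀ m, Module.Finite k (V.obj m)) → (∀ m, N ≤ m → IsZero (V.obj m)) →
    ∃ (I : ℕ → (ℕ ⥤ ModuleCat k)) (d : ∀ i : ℕ, I i ⟶ I (i + 1)) (η : V ⟶ I 0),
      (∀ i, EIFinDim k (I i) ∧ Injective (I i)) ∧
      (∃ m : ℕ, ∀ i, m < i → IsZero (I i)) ∧
      Mono η ∧
      (∃ w0 : η ≫ d 0 = 0, (ShortComplex.mk η (d 0) w0).Exact) ∧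
      (∀ i : ℕ, ∃ w : d i ≫ d (i + 1) = 0, (ShortComplex.mk (d i) (d (i + 1)) w).Exact) := by
  obtain ⟨hIso, hEmpty, hNE, hFin, hSurj⟩ := hC
  intro N
  induction N with
  | zero =>
    intro V hfin hz
    have hzV : IsZero V := Functor.isZero V (fun m => hz m (Nat.zero_le m))
    refine ⟨fun _ => V, fun _ => 0, 𝟙 V,
      fun i => ⟨⟨hfin, ⟨0, fun m _ => hz m (Nat.zero_le m)⟩⟩, hzV.injective⟩,
      ⟨0, fun i _ => hzV⟩, inferInstance,
      ⟨by simp, ShortComplex.exact_of_isZero_X₂ _ hzV⟩,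
      fun i => ⟨by simp, ShortComplex.exact_of_isZero_X₂ _ hzV⟩⟩
  | succ N ih =>
    intro V hfin hz
    classical
    set F : Fin (N + 1) → (ℕ ⥤ ModuleCat k) := fun i => Coind k V (i : ℕ) with hF
    set I0 : ℕ ⥤ ModuleCat k := PFun k F with hI0
    set φ : V ⟶ I0 := PFun.lift k (fun i => psi k V (i : ℕ)) with hφ
    -- φ is a mono
    have hmono : Mono φ := by
      rw [NatTrans.mono_iff_mono_app]
      intro m
      rw [ModuleCat.mono_iff_injective]
      rcases le_or_gt m N with hm | hm
      · intro x y hxy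
        have := congrFun (congrArg Subtype.val (congrFun hxy ⟨m, Nat.lt_succ_of_le hm⟩)) (𝟙 m)
        have ex : ∀ z : V.obj m, ((φ.app m z) ⟨m, Nat.lt_succ_of_le hm⟩).1 (𝟙 m) = z := by
          intro z
          show V.map (𝟙 m) z = z
          rw [V.map_id]; rfl
        rwa [ex x, ex y] at this
      · haveI := subsingleton_of_isZero (hz m hm)
        intro x y _
        exact Subsingleton.elim x y
    -- finite dimensionality of I0
    have hI0fin : ∀ m, Module.Finite k (I0.obj m) := by
      intro m
      haveI : ∀ i : Fin (N+1), Module.Finite k (V.obj (i : ℕ)) := fun i => hfin _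
      haveI : ∀ i : Fin (N+1), Finite (m ⟶ (i : ℕ)) := fun i => hFin m _
      haveI : ∀ i : Fin (N+1), Module.Finite k ((m ⟶ (i : ℕ)) → V.obj (i : ℕ)) :=
        fun i => Module.Finite.pi
      haveI : ∀ i : Fin (N+1), Module.Finite k ((F i).obj m) := by
        intro i
        show Module.Finite k (csub k V (i : ℕ) m)
        infer_instance
      show Module.Finite k (∀ i, (F i).obj m)
      infer_instance
    have hI0zero : ∀ m, N < m → IsZero (I0.obj m) := by
      intro m hm
      haveI : ∀ i : Fin (N+1), Subsingleton ((F i).obj m) := by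
        intro i
        exact csub_subsingleton (hEmpty (lt_of_le_of_lt (Nat.lt_succ_iff.1 i.isLt) hm))
      haveI : Subsingleton ((PFun k F).obj m) := by
        show Subsingleton (∀ i, (F i).obj m)
        infer_instance
      exact ModuleCat.isZero_of_subsingleton _
    -- injectivity of I0
    have hI0inj : Injective I0 := PFun.injective F (fun i =>
      injective_Coind ⟨hIso, hEmpty, hNE, hFin, hSurj⟩ V (i : ℕ))
    -- surjectivity of φ in degrees ≥ N
    have φsurj : ∀ m, N ≤ m → Function.Surjective (φ.app m) := by
      intro m hm
      rcases eq_or_lt_of_le hm with rfl | hm'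
      · intro t
        refine ⟨((t : ∀ i, (F i).obj N) (Fin.last N)).1 (𝟙 N), ?_⟩
        funext i
        by_cases hi : (i : ℕ) = N
        · have : i = Fin.last N := Fin.ext hi
          rw [this]
          apply Subtype.ext
          funext g
          show V.map g ((t (Fin.last N)).1 (𝟙 N)) = (t (Fin.last N)).1 g
          have := (t (Fin.last N)).2 (𝟙 N) g
          rw [Category.id_comp] at this
          rw [this]
        · have hlt : (i : ℕ) < N := lt_of_le_of_ne (Nat.lt_succ_iff.1 i.isLt) hi
          haveI := csub_subsingleton (V := V) (hEmpty hlt)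
          exact Subsingleton.elim _ _
      · haveI : ∀ i : Fin (N+1), Subsingleton ((F i).obj m) := fun i =>
          csub_subsingleton (hEmpty (lt_of_le_of_lt (Nat.lt_succ_iff.1 i.isLt) hm'))
        haveI : Subsingleton ((PFun k F).obj m) := by
          show Subsingleton (∀ i, (F i).obj m)
          infer_instance
        intro t
        exact ⟨0, Subsingleton.elim _ _⟩
    -- the cokernel
    set Q : ℕ ⥤ ModuleCat k := cokernel φ with hQ
    set π : I0 ⟶ Q := cokernel.π φ with hπ
    haveI : Epi π := coequalizer.π_epi
    have πsurj : ∀ m, Function.Surjective (π.app m) := by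
      intro m
      haveI : Epi (π.app m) := inferInstance
      exact (ModuleCat.epi_iff_surjective _).1 inferInstance
    have πφ : ∀ m (x : V.obj m), π.app m (φ.app m x) = 0 := by
      intro m x
      have h0 : φ ≫ π = 0 := cokernel.condition φ
      have := ConcreteCategory.congr_hom (congrArg (fun t => NatTrans.app t m) h0) x
      simpa using this
    have Qfin : ∀ m, Module.Finite k (Q.obj m) := by
      intro m
      haveI := hI0fin m
      exact Module.Finite.of_surjective (π.app m).hom (πsurj m)
    have Qzero : ∀ m, N ≤ m → IsZero (Q.obj m) := by
      intro m hm
      haveI : Subsingleton (Q.obj m) := by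
        refine ⟨fun a b => ?_⟩
        have hz0 : ∀ q : Q.obj m, q = 0 := by
          intro q
          obtain ⟨y, hy⟩ := πsurj m q
          obtain ⟨x, hx⟩ := φsurj m hm y
          rw [← hy, ← hx, πφ]
        rw [hz0 a, hz0 b]
      exact ModuleCat.isZero_of_subsingleton _
    obtain ⟨J, dJ, ηQ, hJ, ⟨mQ, hmQ⟩, hMonoηQ, ⟨w0Q, hex0Q⟩, hexQ⟩ := ih Q Qfin Qzero
    refine ⟨fun i => match i with | 0 => I0 | (j+1) => J j,
      fun i => match i with | 0 => (π ≫ ηQ : I0 ⟶ J 0) | (j+1) => dJ j,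
      φ, ?_, ?_, hmono, ?_, ?_⟩
    · intro i
      match i with
      | 0 => exact ⟨⟨hI0fin, ⟨N, fun m hm => hI0zero m hm⟩⟩, hI0inj⟩
      | (j+1) => exact hJ j
    · refine ⟨mQ + 1, fun i hi => ?_⟩
      match i, hi with
      | (j+1), hi => exact hmQ j (by omega)
    · have w0 : φ ≫ (π ≫ ηQ) = 0 := by
        rw [← Category.assoc, cokernel.condition, zero_comp]
      refine ⟨w0, ?_⟩
      have hS1 : (ShortComplex.mk φ π (cokernel.condition φ)).Exact :=
        ShortComplex.exact_of_g_is_cokernel _ (cokernelIsCokernel φ)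
      haveI := hMonoηQ
      let ψm : ShortComplex.mk φ π (cokernel.condition φ) ⟶ ShortComplex.mk φ (π ≫ ηQ) w0 :=
        { τ₁ := 𝟙 _, τ₂ := 𝟙 _, τ₃ := ηQ,
          comm₁₂ := by simp, comm₂₃ := by simp }
      haveI : Epi ψm.τ₁ := by dsimp only [ψm]; infer_instance
      haveI : IsIso ψm.τ₂ := by dsimp only [ψm]; infer_instance
      haveI : Mono ψm.τ₃ := by dsimp only [ψm]; exact hMonoηQ
      exact (ShortComplex.exact_iff_of_epi_of_isIso_of_mono ψm).1 hS1
    · intro i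
      match i with
      | 0 =>
        have w : (π ≫ ηQ) ≫ dJ 0 = 0 := by
          rw [Category.assoc, w0Q, comp_zero]
        refine ⟨w, ?_⟩
        let ψm : ShortComplex.mk (π ≫ ηQ) (dJ 0) w ⟶ ShortComplex.mk ηQ (dJ 0) w0Q :=
          { τ₁ := π, τ₂ := 𝟙 _, τ₃ := 𝟙 _,
            comm₁₂ := by simp, comm₂₃ := by simp }
        haveI : Epi ψm.τ₁ := by dsimp only [ψm]; infer_instance
        haveI : IsIso ψm.τ₂ := by dsimp only [ψm]; infer_instance
        haveI : Mono ψm.τ₃ := by dsimp only [ψm]; infer_instance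
        exact (ShortComplex.exact_iff_of_epi_of_isIso_of_mono ψm).2 hex0Q
      | (j+1) => exact hexQ j

end EIProof

end EIProofDev

/-- **Lemma.** Let `k` be a field of characteristic 0 and `C` an EI category with
object set `ℕ` satisfying the standing conditions. Every finite-dimensional
`C`-module `V` admits a finite injective resolution
`0 → V → I^0 → I^1 → ⋯ → I^m → 0` with finite-dimensional injective terms. -/
theorem EI.findim_injective_resolution [Category.{0} ℕ] (k : Type) [Field k]
    [CharZero k] (hC : EIStanding)
    (V : ℕ ⥤ ModuleCat k) (hfd : EIFinDim k V) :
    ∃ (I : ℕ → (ℕ ⥤ ModuleCat k)) (d : ∀ i : ℕ, I i ⟶ I (i + 1)) (η : V ⟶ I 0),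
      (∀ i, EIFinDim k (I i) ∧ Injective (I i)) ∧
      (∃ m : ℕ, ∀ i, m < i → IsZero (I i)) ∧
      Mono η ∧
      (∃ w0 : η ≫ d 0 = 0, (ShortComplex.mk η (d 0) w0).Exact) ∧
      (∀ i : ℕ, ∃ w : d i ≫ d (i + 1) = 0, (ShortComplex.mk (d i) (d (i + 1)) w).Exact) := by
  obtain ⟨hfin, N₀, hN₀⟩ := hfd
  exact EIProof.main hC (N₀ + 1) V hfin (fun m hm => hN₀ m (by omega))
end

section
/- Let k be a field of characteristic 0 and let C be an EI category with object set ℕ satisfying the standing conditions. Assume that C satisfies the transitivity condition and that 0 is an initial object of C. Then for every n ∈ ℕ, the C_n-module kC_n e_0 (sending m ∈ {0,…,n} to the free k-module on C(0,m)) is an injective object in the abelian category of C_n-modules. -/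
open CategoryTheory CategoryTheory.Limits

attribute [local instance] CategoryTheory.Abelian.hasFiniteBiproducts

lemma EI.trans_all [Category.{0} ℕ] (hC : EIStanding) (htr : EITransitive) :
    ∀ (N : ℕ) {m : ℕ} (f g : (m : ℕ) ⟶ (N : ℕ)), ∃ h : (N : ℕ) ⟶ N, f ≫ h = g := by
  obtain ⟨hiso, hempty, hne, hfin, hfact⟩ := hC
  intro N
  induction N with
  | zero =>
    intro m f g
    have hm : m = 0 := by
      by_contra h'
      exact (hempty (Nat.pos_of_ne_zero h')).false f
    subst hm
    haveI := hiso 0 f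
    exact ⟨inv f ≫ g, by simp⟩
  | succ N ih =>
    intro m f g
    have hm : m ≤ N + 1 := by
      by_contra h'
      exact (hempty (Nat.lt_of_not_le h')).false f
    rcases Nat.lt_or_ge m (N + 1) with hlt | hge
    · have hmN : m ≤ N := Nat.lt_succ_iff.mp hlt
      obtain ⟨f₁, f₂, hf⟩ := hfact hmN (Nat.le_succ N) f
      obtain ⟨g₁, g₂, hg⟩ := hfact hmN (Nat.le_succ N) g
      obtain ⟨u, hu⟩ := ih f₁ g₁
      obtain ⟨h, hh⟩ := htr N f₂ (u ≫ g₂)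
      refine ⟨h, ?_⟩
      rw [← hf, Category.assoc, hh, ← Category.assoc, hu, hg]
    · have hm' : m = N + 1 := le_antisymm hm hge
      subst hm'
      haveI := hiso (N + 1) f
      exact ⟨inv f ≫ g, by simp⟩

/-- **Lemma.** Let `k` be a field of characteristic 0 and `C` an EI category with
object set `ℕ` satisfying the standing conditions, the transitivity condition, and
having `0` as an initial object. Then for every `n`, the `C_n`-module `kC_n e_0`
is an injective object of the abelian category of `C_n`-modules. -/
theorem EI.sub_free0_injective [Category.{0} ℕ] (k : Type) [Field k] [CharZero k]
    (hC : EIStanding) (htr : EITransitive) (h0 : EIInitialZero) (n : ℕ) :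
    Injective ((coyoneda.obj (Opposite.op (⟨0, Nat.zero_le n⟩ : EIsub n)) ⋙
      ModuleCat.free k : EIsub n ⥤ ModuleCat k)) := by
  have trans_all := EI.trans_all hC htr
  obtain ⟨hiso, hempty, hne, hfin, hfact⟩ := hC
  set z : EIsub n := ⟨0, Nat.zero_le n⟩ with hz
  set F : EIsub n ⥤ ModuleCat k :=
    (coyoneda.obj (Opposite.op z) ⋙ ModuleCat.free k) with hF
  set nn : EIsub n := ⟨n, le_refl n⟩ with hnn
  haveI hsub : ∀ m : EIsub n, Subsingleton (z ⟶ m) := fun m => ⟨fun a b => ObjectProperty.hom_ext _ ((h0 m.obj).2.elim _ _)⟩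
  have e : ∀ m : EIsub n, (z ⟶ m) := fun m => ObjectProperty.homMk ((h0 m.obj).1).some
  -- every element of F.obj m is a single
  have rep : ∀ (m : EIsub n) (v : F.obj m), ∃ b : k,
      v = (Finsupp.single (e m) b : F.obj m) := by
    intro m v
    refine ⟨(Finsupp.lapply (e m) : ((z ⟶ m) →₀ k) →ₗ[k] k) v, ?_⟩
    show (v : (z ⟶ m) →₀ k) = Finsupp.single (e m) (Finsupp.lapply (e m) (v : (z ⟶ m) →₀ k))
    change _ = Finsupp.single (e m) ((show (z ⟶ m) →₀ k from v) (e m))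
    refine Finsupp.ext fun a => ?_
    have ha : a = e m := @Subsingleton.elim _ (hsub m) _ _
    subst ha
    simp
  -- the coefficient functional on F.obj m
  obtain ⟨coefn, hcoefn⟩ : ∃ coefn : ∀ m : EIsub n, (F.obj m →ₗ[k] k),
      ∀ (m : EIsub n) (b : k), coefn m (Finsupp.single (e m) b : F.obj m) = b := by
    refine ⟨fun m => Finsupp.lapply (e m), fun m b => ?_⟩
    exact Finsupp.single_eq_same
  -- the single-producing linear map into F.obj m
  obtain ⟨sing, hsing⟩ : ∃ sing : ∀ m : EIsub n, (k →ₗ[k] F.obj m),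
      ∀ (m : EIsub n) (b : k), sing m b = (Finsupp.single (e m) b : F.obj m) :=
    ⟨fun m => Finsupp.lsingle (e m), fun m b => rfl⟩
  -- F.map sends singles to singles
  have map_single : ∀ {m m' : EIsub n} (u : m ⟶ m') (c : k),
      F.map u (Finsupp.single (e m) c : F.obj m) = (Finsupp.single (e m') c : F.obj m') := by
    intro m m' u c
    show Finsupp.lmapDomain k k _ (Finsupp.single (e m) c) = _
    rw [Finsupp.lmapDomain_apply, Finsupp.mapDomain_single]
    congr 1
    exact @Subsingleton.elim _ (hsub m') _ _
  constructor
  intro X Y α β hβ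
  have hmono : ∀ m : EIsub n, Mono (β.app m) := (NatTrans.mono_iff_mono_app β).mp hβ
  have hinj : Function.Injective (β.app nn) :=
    (ModuleCat.mono_iff_injective (β.app nn)).mp (hmono nn)
  -- elementwise naturality
  have natY : ∀ {m m' : EIsub n} (u : m ⟶ m') (x : X.obj m),
      Y.map u (β.app m x) = β.app m' (X.map u x) := by
    intro m m' u x
    have h2 := DFunLike.congr_fun (congrArg ModuleCat.Hom.hom (β.naturality u)) x
    simp only [ModuleCat.hom_comp, LinearMap.comp_apply] at h2
    exact h2.symm
  have natF : ∀ {m m' : EIsub n} (u : m ⟶ m') (x : X.obj m),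
      F.map u (α.app m x) = α.app m' (X.map u x) := by
    intro m m' u x
    have h2 := DFunLike.congr_fun (congrArg ModuleCat.Hom.hom (α.naturality u)) x
    simp only [ModuleCat.hom_comp, LinearMap.comp_apply] at h2
    exact h2.symm
  -- the coefficient functional of α at nn
  obtain ⟨f', hf'app⟩ : ∃ f' : X.obj nn →ₗ[k] k,
      ∀ x : X.obj nn, f' x = coefn nn (α.app nn x) :=
    ⟨(coefn nn).comp (α.app nn).hom, fun x => rfl⟩
  -- the key compatibility property of f'
  have hf'inv : ∀ (m : EIsub n) (u : m ⟶ nn) (x : X.obj m),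
      f' (X.map u x) = coefn m (α.app m x) := by
    intro m u x
    obtain ⟨b, hb⟩ := rep m (α.app m x)
    rw [hf'app, ← natF u x, hb, map_single, hcoefn, hcoefn]
  -- extend f' along β.app nn
  obtain ⟨ψ, hψx⟩ : ∃ ψ : Y.obj nn →ₗ[k] k, ∀ x : X.obj nn, ψ (β.app nn x) = f' x := by
    set p : Submodule k (Y.obj nn) := LinearMap.range (β.app nn).hom with hp
    set eqv : X.obj nn ≃ₗ[k] p := LinearEquiv.ofInjective (β.app nn).hom hinj with heqv
    obtain ⟨ψ, hψ⟩ := LinearMap.exists_extend (f'.comp (eqv.symm : p →ₗ[k] X.obj nn))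
    refine ⟨ψ, fun x => ?_⟩
    have h1 : (β.app nn x : Y.obj nn) = p.subtype (eqv x) := rfl
    rw [h1, ← LinearMap.comp_apply, hψ]
    simp
  -- the finite group G = C(n,n)
  haveI : Finite ((n : ℕ) ⟶ (n : ℕ)) := hfin n n
  haveI : Finite (nn ⟶ nn) := Finite.of_injective (fun f : nn ⟶ nn => f.hom) (fun a b h => ObjectProperty.hom_ext _ h)
  haveI : Fintype (nn ⟶ nn) := Fintype.ofFinite _
  set c : k := (Fintype.card (nn ⟶ nn) : k) with hc
  have hc0 : c ≠ 0 := by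
    rw [hc]
    exact Nat.cast_ne_zero.mpr (Fintype.card_pos_iff.mpr ⟨𝟙 nn⟩).ne'
  -- the averaged functional
  obtain ⟨Φ, hΦapp⟩ : ∃ Φ : Y.obj nn →ₗ[k] k,
      ∀ y : Y.obj nn, Φ y = c⁻¹ * ∑ h : nn ⟶ nn, ψ (Y.map h y) := by
    refine ⟨c⁻¹ • (∑ h : nn ⟶ nn, ψ.comp (Y.map h).hom), fun y => ?_⟩
    simp [LinearMap.sum_apply, smul_eq_mul]
  -- invariance of Φ
  have hinv : ∀ (h₀ : nn ⟶ nn) (y : Y.obj nn), Φ (Y.map h₀ y) = Φ y := by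
    intro h₀ y
    obtain ⟨h₁, hh₁, hh₂⟩ : ∃ h₁ : nn ⟶ nn, h₀ ≫ h₁ = 𝟙 nn ∧ h₁ ≫ h₀ = 𝟙 nn := by
      obtain ⟨h₁, hh₁, hh₂⟩ := (hiso n h₀.hom).out
      exact ⟨ObjectProperty.homMk h₁, ObjectProperty.hom_ext _ hh₁, ObjectProperty.hom_ext _ hh₂⟩
    have hbij : Function.Bijective (fun h : nn ⟶ nn => h₀ ≫ h) := by
      constructor
      · intro a b hab
        dsimp only at hab
        calc a = h₁ ≫ (h₀ ≫ a) := by rw [← Category.assoc, hh₂, Category.id_comp]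
          _ = h₁ ≫ (h₀ ≫ b) := by rw [hab]
          _ = b := by rw [← Category.assoc, hh₂, Category.id_comp]
      · intro b
        refine ⟨h₁ ≫ b, ?_⟩
        dsimp only
        rw [← Category.assoc, hh₁, Category.id_comp]
    rw [hΦapp, hΦapp]
    congr 1
    calc ∑ h : nn ⟶ nn, ψ (Y.map h (Y.map h₀ y))
        = ∑ h : nn ⟶ nn, ψ (Y.map (h₀ ≫ h) y) := by
          refine Finset.sum_congr rfl (fun h _ => ?_)
          congr 1
          rw [Y.map_comp]
          rfl
      _ = ∑ h : nn ⟶ nn, ψ (Y.map h y) :=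
          Fintype.sum_bijective _ hbij _ _ (fun h => rfl)
  -- independence of Φ ∘ Y.map f on the choice of f : m ⟶ nn
  have hind : ∀ (m : EIsub n) (f g : m ⟶ nn) (y : Y.obj m),
      Φ (Y.map f y) = Φ (Y.map g y) := by
    intro m f g y
    obtain ⟨h, hh⟩ := trans_all n (m := m.obj) f.hom g.hom
    have h3 : Y.map g y = Y.map (ObjectProperty.homMk h) (Y.map f y) := by
      have hcomp : (f ≫ ObjectProperty.homMk h : m ⟶ nn) = g := ObjectProperty.hom_ext _ hh
      rw [← hcomp, Y.map_comp]
      rfl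
    rw [h3, hinv]
  -- Φ extends f' (via averaging, using char 0)
  have hext : ∀ x : X.obj nn, Φ (β.app nn x) = f' x := by
    intro x
    rw [hΦapp]
    have step : ∀ h : nn ⟶ nn, ψ (Y.map h (β.app nn x)) = f' x := by
      intro h
      rw [natY h x, hψx, hf'inv nn h x, hf'app]
    rw [Finset.sum_congr rfl (fun h _ => step h), Finset.sum_const, Finset.card_univ,
      nsmul_eq_mul, ← mul_assoc, ← hc, inv_mul_cancel₀ hc0, one_mul]
  -- chosen arrows to nn
  have t : ∀ m : EIsub n, (m ⟶ nn) := fun m => ObjectProperty.homMk (hne m.property).some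
  -- the extension H : Y ⟶ F
  refine ⟨{ app := fun m => ModuleCat.ofHom ((sing m).comp (Φ.comp (Y.map (t m)).hom)),
            naturality := ?_ }, ?_⟩
  · intro m m' u
    ext y
    show sing m' (Φ (Y.map (t m') (Y.map u y))) = F.map u (sing m (Φ (Y.map (t m) y)))
    rw [hsing, hsing, map_single]
    congr 1
    have h4 : Y.map (t m') (Y.map u y) = Y.map (u ≫ t m') y := by
      rw [Y.map_comp]; rfl
    rw [h4, hind m (u ≫ t m') (t m)]
  · ext m x
    show sing m (Φ (Y.map (t m) (β.app m x))) = α.app m x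
    rw [natY (t m) x, hext, hf'inv m (t m) x, hsing]
    obtain ⟨b, hb⟩ := rep m (α.app m x)
    rw [hb, hcoefn]
end

section
/- Let k be a field of characteristic 0 and let C be an EI category with object set ℕ satisfying the standing conditions. Assume that C is locally Noetherian over k, that C satisfies the transitivity condition, and that 0 is an initial object of C. Then the C-module kC e_0 is an injective object in the abelian category of C-modules. -/
open CategoryTheory CategoryTheory.Limits

attribute [local instance] CategoryTheory.Abelian.hasFiniteBiproducts

namespace EIAux

open CategoryTheory

variable [Category.{0} ℕ]

/-- A chosen `Fintype` structure on each hom-set. -/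
noncomputable def fI (hfin : ∀ m n : ℕ, Finite (m ⟶ n)) (m n : ℕ) : Fintype (m ⟶ n) :=
  @Fintype.ofFinite _ (hfin m n)

/-- A chosen morphism `n ⟶ N` whenever `n ≤ N`. -/
noncomputable def ref (hne : ∀ ⦃m n : ℕ⦄, m ≤ n → Nonempty (m ⟶ n)) {n N : ℕ}
    (h : n ≤ N) : n ⟶ N := (hne h).some

/-- The averaging operator over the endomorphism group of `n`. -/
noncomputable def avg (k : Type) [Field k] (hfin : ∀ m n : ℕ, Finite (m ⟶ n))
    (Y : ℕ ⥤ ModuleCat k) (n : ℕ) : Y.obj n →ₗ[k] Y.obj n :=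
  (Nat.card (n ⟶ n) : k)⁻¹ •
    ∑ g ∈ @Finset.univ _ (fI hfin n n), (Y.map g).hom

lemma avg_apply (k : Type) [Field k] (hfin : ∀ m n : ℕ, Finite (m ⟶ n))
    (Y : ℕ ⥤ ModuleCat k) (n : ℕ) (x : Y.obj n) :
    avg k hfin Y n x =
      (Nat.card (n ⟶ n) : k)⁻¹ • ∑ g ∈ @Finset.univ _ (fI hfin n n), Y.map g x := by
  rw [avg, LinearMap.smul_apply, LinearMap.sum_apply]

lemma avg_map_endo (k : Type) [Field k]
    (hiso : ∀ (n : ℕ) (f : n ⟶ n), IsIso f) (hfin : ∀ m n : ℕ, Finite (m ⟶ n))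
    (Y : ℕ ⥤ ModuleCat k) {n : ℕ} (u : n ⟶ n) (x : Y.obj n) :
    avg k hfin Y n (Y.map u x) = avg k hfin Y n x := by
  letI := fI hfin n n
  haveI := hiso n u
  rw [avg_apply, avg_apply]
  congr 1
  have h1 : ∀ g : n ⟶ n, Y.map g (Y.map u x) = Y.map (u ≫ g) x := fun g => by
    rw [Y.map_comp]; rfl
  calc ∑ g : n ⟶ n, Y.map g (Y.map u x) = ∑ g : n ⟶ n, Y.map (u ≫ g) x :=
        Finset.sum_congr rfl (fun g _ => h1 g)
    _ = ∑ g : n ⟶ n, Y.map g x :=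
        Equiv.sum_comp
          ⟨fun g => u ≫ g, fun g => inv u ≫ g, fun g => by simp, fun g => by simp⟩
          (fun g => Y.map g x)

lemma avg_const_aux (k : Type) [Field k]
    (hiso : ∀ (n : ℕ) (f : n ⟶ n), IsIso f) (hfin : ∀ m n : ℕ, Finite (m ⟶ n))
    (hsur : ∀ ⦃m l n : ℕ⦄, m ≤ l → l ≤ n → ∀ h : m ⟶ n, ∃ (g : m ⟶ l) (f : l ⟶ n), g ≫ f = h)
    (htr : EITransitive) (Y : ℕ ⥤ ModuleCat k) :
    ∀ (d n N : ℕ), N = n + d → ∀ (p q : n ⟶ N) (x : Y.obj n),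
      avg k hfin Y N (Y.map p x) = avg k hfin Y N (Y.map q x) := by
  intro d
  induction d with
  | zero =>
    intro n N hN p q x
    subst hN
    rw [avg_map_endo k hiso hfin Y p, avg_map_endo k hiso hfin Y q]
  | succ d ih =>
    intro n N hN p q x
    obtain ⟨a, b, hab⟩ := hsur (Nat.le_succ n) (by omega : n + 1 ≤ N) p
    obtain ⟨a', b', hab'⟩ := hsur (Nat.le_succ n) (by omega : n + 1 ≤ N) q
    obtain ⟨u, hu⟩ := htr n a a'
    have e1 : Y.map p x = Y.map b (Y.map a x) := by rw [← hab, Y.map_comp]; rfl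
    have e2 : Y.map q x = Y.map b' (Y.map a' x) := by rw [← hab', Y.map_comp]; rfl
    have e4 : Y.map a' x = Y.map u (Y.map a x) := by rw [← hu, Y.map_comp]; rfl
    have e5 : Y.map (u ≫ b') (Y.map a x) = Y.map b' (Y.map u (Y.map a x)) := by
      rw [Y.map_comp]; rfl
    rw [e1, e2, e4, ← e5]
    exact ih (n + 1) N (by omega) b (u ≫ b') (Y.map a x)

lemma avg_const (k : Type) [Field k]
    (hiso : ∀ (n : ℕ) (f : n ⟶ n), IsIso f)
    (hempty : ∀ ⦃m n : ℕ⦄, n < m → IsEmpty (m ⟶ n))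
    (hfin : ∀ m n : ℕ, Finite (m ⟶ n))
    (hsur : ∀ ⦃m l n : ℕ⦄, m ≤ l → l ≤ n → ∀ h : m ⟶ n, ∃ (g : m ⟶ l) (f : l ⟶ n), g ≫ f = h)
    (htr : EITransitive) (Y : ℕ ⥤ ModuleCat k) {n N : ℕ} (p q : n ⟶ N) (x : Y.obj n) :
    avg k hfin Y N (Y.map p x) = avg k hfin Y N (Y.map q x) := by
  have hle : n ≤ N := le_of_not_gt (fun hlt => (hempty hlt).elim p)
  exact avg_const_aux k hiso hfin hsur htr Y (N - n) n N (by omega) p q x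

variable (k : Type) [Field k]

/-- The scalar functional `X.obj n → k` induced by a map `g : X ⟶ kC e₀`,
via evaluation at the unique map `0 ⟶ n`. -/
noncomputable def phi (h0 : EIInitialZero) (X : ℕ ⥤ ModuleCat k)
    (g : X ⟶ EIfree k 0) (n : ℕ) : X.obj n →ₗ[k] k :=
  Finsupp.lapply (h0 n).1.some ∘ₗ (g.app n).hom

lemma single_subsingleton {α : Type} [Subsingleton α] (a : α) (l : α →₀ k) :
    l = Finsupp.single a (l a) := by
  ext b
  rw [Subsingleton.elim b a]
  simp

lemma EIfree_map_apply {n m : ℕ} (h : n ⟶ m) (l : ((0 : ℕ) ⟶ n) →₀ k) :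
    ((EIfree k 0).map h).hom l
      = Finsupp.mapDomain (fun v => v ≫ h) l := rfl

lemma phi_nat (h0 : EIInitialZero) (X : ℕ ⥤ ModuleCat k) (g : X ⟶ EIfree k 0)
    {n m : ℕ} (h : n ⟶ m) (x : X.obj n) :
    phi k h0 X g m (X.map h x) = phi k h0 X g n x := by
  haveI := (h0 m).2
  haveI := (h0 n).2
  have key : (g.app m (X.map h x) : ((0 : ℕ) ⟶ m) →₀ k)
      = Finsupp.mapDomain (fun v => v ≫ h) (g.app n x : ((0 : ℕ) ⟶ n) →₀ k) := by
    have hnat := g.naturality h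
    calc (g.app m (X.map h x) : ((0 : ℕ) ⟶ m) →₀ k)
        = (X.map h ≫ g.app m) x := rfl
      _ = (g.app n ≫ (EIfree k 0).map h) x := by rw [hnat]
      _ = (show (EIfree k 0).obj m from
            Finsupp.mapDomain (fun v => v ≫ h) (g.app n x : ((0 : ℕ) ⟶ n) →₀ k)) := rfl
  calc phi k h0 X g m (X.map h x)
      = (Finsupp.lapply (h0 m).1.some : (((0 : ℕ) ⟶ m) →₀ k) →ₗ[k] k)
          (g.app m (X.map h x) : ((0 : ℕ) ⟶ m) →₀ k) := rfl
    _ = (Finsupp.lapply (h0 m).1.some : (((0 : ℕ) ⟶ m) →₀ k) →ₗ[k] k)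
          (Finsupp.mapDomain (fun v => v ≫ h) (g.app n x : ((0 : ℕ) ⟶ n) →₀ k)) := by
        rw [key]
    _ = (Finsupp.lapply (h0 n).1.some : (((0 : ℕ) ⟶ n) →₀ k) →ₗ[k] k)
          (g.app n x : ((0 : ℕ) ⟶ n) →₀ k) := by
        rw [single_subsingleton k ((h0 n).1.some) (g.app n x : ((0 : ℕ) ⟶ n) →₀ k),
          Finsupp.mapDomain_single,
          Subsingleton.elim ((h0 n).1.some ≫ h) ((h0 m).1.some)]
        simp
    _ = phi k h0 X g n x := rfl

/-- The direct sum of all values of a `C`-module. -/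
abbrev USum (X : ℕ ⥤ ModuleCat k) := DirectSum ℕ (fun n => X.obj n)

/-- Inclusion of a component into the direct sum. -/
noncomputable def iot (Y : ℕ ⥤ ModuleCat k) (n : ℕ) : Y.obj n →ₗ[k] USum k Y :=
  DirectSum.lof k ℕ (fun m => Y.obj m) n

/-- The total functional on the direct sum. -/
noncomputable def sphi (h0 : EIInitialZero) (X : ℕ ⥤ ModuleCat k)
    (g : X ⟶ EIfree k 0) : USum k X →ₗ[k] k :=
  DirectSum.toModule k ℕ k (phi k h0 X g)

/-- The map on direct sums induced by a natural transformation. -/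
noncomputable def siot (X Y : ℕ ⥤ ModuleCat k) (f : X ⟶ Y) :
    USum k X →ₗ[k] USum k Y :=
  DirectSum.toModule k ℕ (USum k Y)
    (fun n => iot k Y n ∘ₗ (f.app n).hom)

/-- The submodule of relations defining the colimit of a `C`-module. -/
noncomputable def Rel (Y : ℕ ⥤ ModuleCat k) : Submodule k (USum k Y) :=
  Submodule.span k
    {y | ∃ (n m : ℕ) (h : n ⟶ m) (w : Y.obj n), y = iot k Y n w - iot k Y m (Y.map h w)}

/-- The stabilization map to level `M`. -/
noncomputable def tau (hne : ∀ ⦃m n : ℕ⦄, m ≤ n → Nonempty (m ⟶ n))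
    (hfin : ∀ m n : ℕ, Finite (m ⟶ n)) (Y : ℕ ⥤ ModuleCat k) (M : ℕ) :
    USum k Y →ₗ[k] Y.obj M :=
  DirectSum.toModule k ℕ (Y.obj M)
    (fun n => if hn : n ≤ M then
        avg k hfin Y M ∘ₗ (Y.map (ref hne hn)).hom
      else 0)

lemma tau_iot_le (hne : ∀ ⦃m n : ℕ⦄, m ≤ n → Nonempty (m ⟶ n))
    (hfin : ∀ m n : ℕ, Finite (m ⟶ n)) (Y : ℕ ⥤ ModuleCat k) {n M : ℕ}
    (hn : n ≤ M) (w : Y.obj n) :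
    tau k hne hfin Y M (iot k Y n w) = avg k hfin Y M (Y.map (ref hne hn) w) := by
  rw [tau, iot, DirectSum.toModule_lof, dif_pos hn]
  rfl

lemma tau_iot_gt (hne : ∀ ⦃m n : ℕ⦄, m ≤ n → Nonempty (m ⟶ n))
    (hfin : ∀ m n : ℕ, Finite (m ⟶ n)) (Y : ℕ ⥤ ModuleCat k) {n M : ℕ}
    (hn : ¬ n ≤ M) (w : Y.obj n) :
    tau k hne hfin Y M (iot k Y n w) = 0 := by
  rw [tau, iot, DirectSum.toModule_lof, dif_neg hn]
  rfl

lemma tau_iot_map (hiso : ∀ (n : ℕ) (f : n ⟶ n), IsIso f)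
    (hempty : ∀ ⦃m n : ℕ⦄, n < m → IsEmpty (m ⟶ n))
    (hne : ∀ ⦃m n : ℕ⦄, m ≤ n → Nonempty (m ⟶ n))
    (hfin : ∀ m n : ℕ, Finite (m ⟶ n))
    (hsur : ∀ ⦃m l n : ℕ⦄, m ≤ l → l ≤ n → ∀ h : m ⟶ n, ∃ (g : m ⟶ l) (f : l ⟶ n), g ≫ f = h)
    (htr : EITransitive) (Y : ℕ ⥤ ModuleCat k) {n m : ℕ} (h : n ⟶ m)
    (w : Y.obj n) {M : ℕ} (hm : m ≤ M) :
    tau k hne hfin Y M (iot k Y m (Y.map h w)) = tau k hne hfin Y M (iot k Y n w) := by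
  have hnm : n ≤ m := le_of_not_gt fun hlt => (hempty hlt).elim h
  have hn : n ≤ M := hnm.trans hm
  rw [tau_iot_le k hne hfin Y hm, tau_iot_le k hne hfin Y hn]
  have e1 : Y.map (ref hne hm) (Y.map h w) = Y.map (h ≫ ref hne hm) w := by
    rw [Y.map_comp]; rfl
  rw [e1]
  exact avg_const k hiso hempty hfin hsur htr Y (h ≫ ref hne hm) (ref hne hn) w

lemma tau_rel (hiso : ∀ (n : ℕ) (f : n ⟶ n), IsIso f)
    (hempty : ∀ ⦃m n : ℕ⦄, n < m → IsEmpty (m ⟶ n))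
    (hne : ∀ ⦃m n : ℕ⦄, m ≤ n → Nonempty (m ⟶ n))
    (hfin : ∀ m n : ℕ, Finite (m ⟶ n))
    (hsur : ∀ ⦃m l n : ℕ⦄, m ≤ l → l ≤ n → ∀ h : m ⟶ n, ∃ (g : m ⟶ l) (f : l ⟶ n), g ≫ f = h)
    (htr : EITransitive) (Y : ℕ ⥤ ModuleCat k) (y : USum k Y) (hy : y ∈ Rel k Y) :
    ∃ N : ℕ, ∀ M : ℕ, N ≤ M → tau k hne hfin Y M y = 0 := by
  refine Submodule.span_induction ?_ ?_ ?_ ?_ hy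
  · rintro y ⟨n, m, h, w, rfl⟩
    refine ⟨m, fun M hM => ?_⟩
    rw [map_sub, tau_iot_map k hiso hempty hne hfin hsur htr Y h w hM, sub_self]
  · exact ⟨0, fun M _ => map_zero _⟩
  · rintro y z _ _ ⟨N1, h1⟩ ⟨N2, h2⟩
    refine ⟨max N1 N2, fun M hM => ?_⟩
    rw [map_add, h1 M (le_trans (le_max_left _ _) hM),
      h2 M (le_trans (le_max_right _ _) hM), add_zero]
  · rintro c y _ ⟨N1, h1⟩
    exact ⟨N1, fun M hM => by rw [map_smul, h1 M hM, smul_zero]⟩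

lemma f_avg (hfin : ∀ m n : ℕ, Finite (m ⟶ n)) (X Y : ℕ ⥤ ModuleCat k)
    (f : X ⟶ Y) (M : ℕ) (z : X.obj M) :
    f.app M (avg k hfin X M z) = avg k hfin Y M (f.app M z) := by
  rw [avg_apply k hfin X M z, avg_apply k hfin Y M (f.app M z), map_smul, map_sum]
  congr 1
  refine Finset.sum_congr rfl (fun v _ => ?_)
  have hnat := f.naturality v
  calc f.app M (X.map v z) = (X.map v ≫ f.app M) z := rfl
    _ = (f.app M ≫ Y.map v) z := by rw [hnat]
    _ = Y.map v (f.app M z) := rfl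

lemma f_tau (hne : ∀ ⦃m n : ℕ⦄, m ≤ n → Nonempty (m ⟶ n))
    (hfin : ∀ m n : ℕ, Finite (m ⟶ n)) (X Y : ℕ ⥤ ModuleCat k) (f : X ⟶ Y)
    (M : ℕ) (x : USum k X) :
    f.app M (tau k hne hfin X M x) = tau k hne hfin Y M (siot k X Y f x) := by
  induction x using DirectSum.induction_on with
  | zero => simp only [map_zero]
  | of n w =>
    rw [← DirectSum.lof_eq_of k]
    show f.app M (tau k hne hfin X M (iot k X n w))
      = tau k hne hfin Y M (siot k X Y f (iot k X n w))
    have hs : siot k X Y f (iot k X n w) = iot k Y n (f.app n w) := by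
      show DirectSum.toModule k ℕ (USum k Y)
          (fun j => iot k Y j ∘ₗ (f.app j).hom)
          (DirectSum.lof k ℕ (fun m => X.obj m) n w) = _
      rw [DirectSum.toModule_lof]
      rfl
    rw [hs]
    by_cases hn : n ≤ M
    · rw [tau_iot_le k hne hfin X hn, tau_iot_le k hne hfin Y hn]
      have h2 : Y.map (ref hne hn) (f.app n w) = f.app M (X.map (ref hne hn) w) := by
        have hnat := f.naturality (ref hne hn)
        calc Y.map (ref hne hn) (f.app n w) = (f.app n ≫ Y.map (ref hne hn)) w := rfl
          _ = (X.map (ref hne hn) ≫ f.app M) w := by rw [hnat]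
          _ = f.app M (X.map (ref hne hn) w) := rfl
      rw [h2]
      exact f_avg k hfin X Y f M (X.map (ref hne hn) w)
    · rw [tau_iot_gt k hne hfin X hn, tau_iot_gt k hne hfin Y hn, map_zero]
  | add x y hx hy => simp only [map_add, hx, hy]

lemma phi_avg [CharZero k] (h0 : EIInitialZero)
    (hfin : ∀ m n : ℕ, Finite (m ⟶ n)) (X : ℕ ⥤ ModuleCat k) (g : X ⟶ EIfree k 0)
    (M : ℕ) (z : X.obj M) :
    phi k h0 X g M (avg k hfin X M z) = phi k h0 X g M z := by
  rw [avg_apply k hfin X M z, map_smul, map_sum]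
  have h1 : ∀ v ∈ @Finset.univ (M ⟶ M) (fI hfin M M),
      phi k h0 X g M (X.map v z) = phi k h0 X g M z :=
    fun v _ => phi_nat k h0 X g v z
  rw [Finset.sum_congr rfl h1, Finset.sum_const]
  have hcard : (@Finset.univ (M ⟶ M) (fI hfin M M)).card = Nat.card (M ⟶ M) := by
    letI := fI hfin M M
    rw [Finset.card_univ, Nat.card_eq_fintype_card]
  have hne0 : (Nat.card (M ⟶ M) : k) ≠ 0 := by
    have h2 : Nat.card (M ⟶ M) ≠ 0 := Nat.card_ne_zero.2 ⟨⟨𝟙 M⟩, hfin M M⟩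
    exact Nat.cast_ne_zero.2 h2
  rw [hcard, ← Nat.cast_smul_eq_nsmul k, smul_smul, inv_mul_cancel₀ hne0, one_smul]

lemma phi_tau [CharZero k] (h0 : EIInitialZero)
    (hne : ∀ ⦃m n : ℕ⦄, m ≤ n → Nonempty (m ⟶ n))
    (hfin : ∀ m n : ℕ, Finite (m ⟶ n)) (X : ℕ ⥤ ModuleCat k) (g : X ⟶ EIfree k 0)
    (x : USum k X) :
    ∃ N : ℕ, ∀ M : ℕ, N ≤ M →
      phi k h0 X g M (tau k hne hfin X M x) = sphi k h0 X g x := by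
  induction x using DirectSum.induction_on with
  | zero => exact ⟨0, fun M _ => by simp only [map_zero]⟩
  | of n w =>
    refine ⟨n, fun M hM => ?_⟩
    rw [← DirectSum.lof_eq_of k]
    show phi k h0 X g M (tau k hne hfin X M (iot k X n w)) = sphi k h0 X g (iot k X n w)
    have hs : sphi k h0 X g (iot k X n w) = phi k h0 X g n w := by
      show DirectSum.toModule k ℕ k (phi k h0 X g)
          (DirectSum.lof k ℕ (fun m => X.obj m) n w) = _
      rw [DirectSum.toModule_lof]
    rw [hs, tau_iot_le k hne hfin X hM, phi_avg k h0 hfin X g,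
      phi_nat k h0 X g (ref hne hM) w]
  | add x y hx hy =>
    obtain ⟨N1, h1⟩ := hx
    obtain ⟨N2, h2⟩ := hy
    refine ⟨max N1 N2, fun M hM => ?_⟩
    simp only [map_add, h1 M (le_trans (le_max_left _ _) hM),
      h2 M (le_trans (le_max_right _ _) hM)]

end EIAux

/-- **Corollary.** Let `k` be a field of characteristic 0 and `C` an EI category
with object set `ℕ` satisfying the standing conditions, locally Noetherian over
`k`, satisfying the transitivity condition and having `0` as an initial object.
Then the `C`-module `kC e_0` is an injective object of the abelian category of
`C`-modules. -/
theorem EI.free0_injective [Category.{0} ℕ] (k : Type) [Field k] [CharZero k]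
    (hC : EIStanding) (hN : EILocNoeth k) (htr : EITransitive) (h0 : EIInitialZero) :
    Injective (EIfree k 0) := by
  classical
  obtain ⟨hiso, hempty, hne, hfin, hsur⟩ := hC
  constructor
  intro X Y g f hf
  have hmono : ∀ n : ℕ, Mono (f.app n) := fun n => (NatTrans.mono_iff_mono_app f).1 hf n
  have hinj : ∀ n : ℕ, Function.Injective (f.app n) :=
    fun n => (ModuleCat.mono_iff_injective (f.app n)).1 (hmono n)
  -- key vanishing statement: the total functional vanishes on preimages of relations
  have key : ∀ x : EIAux.USum k X, EIAux.siot k X Y f x ∈ EIAux.Rel k Y →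
      EIAux.sphi k h0 X g x = 0 := by
    intro x hx
    obtain ⟨N1, h1⟩ := EIAux.tau_rel k hiso hempty hne hfin hsur htr Y _ hx
    obtain ⟨N2, h2⟩ := EIAux.phi_tau k h0 hne hfin X g x
    have e1 : f.app (max N1 N2) (EIAux.tau k hne hfin X (max N1 N2) x) = 0 := by
      rw [EIAux.f_tau k hne hfin X Y f (max N1 N2) x, h1 (max N1 N2) (le_max_left _ _)]
    have e2 : EIAux.tau k hne hfin X (max N1 N2) x = 0 := by
      apply hinj (max N1 N2)
      rw [e1, map_zero]
    rw [← h2 (max N1 N2) (le_max_right _ _), e2, map_zero]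
  -- extend the induced functional from the image of `X` to all of the colimit of `Y`
  let comp : EIAux.USum k X →ₗ[k] (EIAux.USum k Y ⧸ EIAux.Rel k Y) :=
    (EIAux.Rel k Y).mkQ ∘ₗ EIAux.siot k X Y f
  have hker : LinearMap.ker comp ≤ LinearMap.ker (EIAux.sphi k h0 X g) := by
    intro x hx
    rw [LinearMap.mem_ker] at hx ⊢
    apply key
    have hx' : Submodule.Quotient.mk (p := EIAux.Rel k Y) (EIAux.siot k X Y f x) = 0 := hx
    exact (Submodule.Quotient.mk_eq_zero _).1 hx'
  obtain ⟨Rc, hcompl⟩ := Submodule.exists_isCompl (LinearMap.range comp)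
  let proj := (LinearMap.range comp).linearProjOfIsCompl Rc hcompl
  let chi : ↥(LinearMap.range comp) →ₗ[k] k :=
    (Submodule.liftQ (LinearMap.ker comp) (EIAux.sphi k h0 X g) hker) ∘ₗ
      (LinearMap.quotKerEquivRange comp).symm.toLinearMap
  let Phi : EIAux.USum k Y →ₗ[k] k := chi ∘ₗ proj ∘ₗ (EIAux.Rel k Y).mkQ
  have hPhiRel : ∀ y ∈ EIAux.Rel k Y, Phi y = 0 := by
    intro y hy
    have h1 : (EIAux.Rel k Y).mkQ y = 0 := (Submodule.Quotient.mk_eq_zero _).2 hy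
    show chi (proj ((EIAux.Rel k Y).mkQ y)) = 0
    rw [h1, map_zero, map_zero]
  have hPhiSiot : ∀ x, Phi (EIAux.siot k X Y f x) = EIAux.sphi k h0 X g x := by
    intro x
    have hmem : comp x ∈ LinearMap.range comp := ⟨x, rfl⟩
    have h2 : proj (comp x) = ⟨comp x, hmem⟩ :=
      Submodule.linearProjOfIsCompl_apply_left hcompl ⟨comp x, hmem⟩
    have h3 : (LinearMap.quotKerEquivRange comp).symm ⟨comp x, hmem⟩
        = (LinearMap.ker comp).mkQ x :=
      LinearMap.quotKerEquivRange_symm_apply_image comp x hmem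
    show chi (proj ((EIAux.Rel k Y).mkQ (EIAux.siot k X Y f x))) = _
    have h4 : (EIAux.Rel k Y).mkQ (EIAux.siot k X Y f x) = comp x := rfl
    rw [h4, h2]
    show (Submodule.liftQ (LinearMap.ker comp) (EIAux.sphi k h0 X g) hker)
        ((LinearMap.quotKerEquivRange comp).symm ⟨comp x, hmem⟩) = _
    rw [h3]
    exact Submodule.liftQ_apply _ _ x
  -- the extension, as a natural transformation `Y ⟶ kC e₀`
  refine ⟨{ app := fun n => ModuleCat.ofHom ((Finsupp.lsingle ((h0 n).1.some) : k →ₗ[k] (((0 : ℕ) ⟶ n) →₀ k))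
              ∘ₗ Phi ∘ₗ EIAux.iot k Y n : Y.obj n →ₗ[k] (((0 : ℕ) ⟶ n) →₀ k)),
            naturality := ?_ }, ?_⟩
  · intro n m h
    ext w
    haveI := (h0 m).2
    show Finsupp.single ((h0 m).1.some) (Phi (EIAux.iot k Y m (Y.map h w)))
      = ((EIfree k 0).map h).hom
          (Finsupp.single ((h0 n).1.some) (Phi (EIAux.iot k Y n w)))
    have hrel : Phi (EIAux.iot k Y m (Y.map h w)) = Phi (EIAux.iot k Y n w) := by
      have hgen : EIAux.iot k Y n w - EIAux.iot k Y m (Y.map h w) ∈ EIAux.Rel k Y :=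
        Submodule.subset_span ⟨n, m, h, w, rfl⟩
      have h5 := hPhiRel _ hgen
      rw [map_sub, sub_eq_zero] at h5
      exact h5.symm
    rw [hrel, EIAux.EIfree_map_apply, Finsupp.mapDomain_single,
      Subsingleton.elim ((h0 n).1.some ≫ h) ((h0 m).1.some)]
  · apply NatTrans.ext
    funext n
    refine ModuleCat.hom_ext (LinearMap.ext fun w => ?_)
    show Finsupp.single ((h0 n).1.some) (Phi (EIAux.iot k Y n (f.app n w))) = g.app n w
    haveI := (h0 n).2
    have h1 : EIAux.iot k Y n (f.app n w) = EIAux.siot k X Y f (EIAux.iot k X n w) := by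
      show _ = DirectSum.toModule k ℕ (EIAux.USum k Y)
          (fun j => EIAux.iot k Y j ∘ₗ (f.app j).hom)
          (DirectSum.lof k ℕ (fun m => X.obj m) n w)
      rw [DirectSum.toModule_lof]
      rfl
    rw [h1, hPhiSiot]
    have h2 : EIAux.sphi k h0 X g (EIAux.iot k X n w) = EIAux.phi k h0 X g n w := by
      show DirectSum.toModule k ℕ k (EIAux.phi k h0 X g)
          (DirectSum.lof k ℕ (fun m => X.obj m) n w) = _
      rw [DirectSum.toModule_lof]
    rw [h2]
    have h3 := EIAux.single_subsingleton k ((h0 n).1.some)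
      (show ((0 : ℕ) ⟶ n) →₀ k from g.app n w)
    have h4 : (show ((0 : ℕ) ⟶ n) →₀ k from g.app n w)
        = Finsupp.single ((h0 n).1.some) (EIAux.phi k h0 X g n w) := h3
    exact h4.symm
end

section
/- Let k be a field of characteristic p > 0 and let C = FI (the category of finite sets and injections). Then the C-module kC e_0 is NOT an injective object in the abelian category of C-modules. -/
open CategoryTheory CategoryTheory.Limits

/-- Objects of the category `FI`: natural numbers (bundled). -/
structure FI where
  n : ℕ

/-- The category `FI`: a morphism `X ⟶ Y` is an injective map
`{1,…,X.n} → {1,…,Y.n}`, with composition of maps. -/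
instance FI.category : Category FI where
  Hom X Y := Fin X.n ↪ Fin Y.n
  id X := Function.Embedding.refl _
  comp f g := f.trans g

/-- The free `FI`-module `kC e_0`, sending `m` to the free `k`-module on the
(one-element) hom-set `FI(0, m)`. -/
noncomputable def FI.free0 (k : Type) [Field k] : FI ⥤ ModuleCat k :=
  coyoneda.obj (Opposite.op ⟨0⟩) ⋙ ModuleCat.free k

namespace FIAux

instance (m : ℕ) : Subsingleton (Fin 0 ↪ Fin m) :=
  ⟨fun f g => by ext x; exact x.elim0⟩

instance (X : FI) : Subsingleton ((⟨0⟩ : FI) ⟶ X) :=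
  ⟨fun f g => Function.Embedding.ext fun x => x.elim0⟩

/-- setoid : embeddings up to precomposition with a permutation -/
def pSetoid (p m : ℕ) : Setoid (Fin p ↪ Fin m) where
  r g g' := ∃ σ : Equiv.Perm (Fin p), σ.toEmbedding.trans g = g'
  iseqv := by
    constructor
    · exact fun g => ⟨1, by ext x; rfl⟩
    · rintro g g' ⟨σ, rfl⟩
      exact ⟨σ⁻¹, by ext x; simp⟩
    · rintro a b c ⟨σ, rfl⟩ ⟨τ, rfl⟩
      exact ⟨τ.trans σ, by ext x; simp⟩

/-- Type-level functor of classes -/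
def cl (p : ℕ) : FI ⥤ Type where
  obj X := Quotient (pSetoid p X.n)
  map {X Y} f := ↾(Quotient.map (fun g : Fin p ↪ Fin X.n => g.trans f)
    (by rintro g g' ⟨σ, rfl⟩; exact ⟨σ, by ext x; rfl⟩))
  map_id X := by
    apply ConcreteCategory.hom_ext; intro q
    induction q using Quotient.inductionOn with
    | h g => exact congrArg (Quotient.mk _) (Function.Embedding.ext fun x => rfl)
  map_comp f g := by
    apply ConcreteCategory.hom_ext; intro q
    induction q using Quotient.inductionOn with
    | h a => rfl

end FIAux

namespace FIAux

variable (k : Type) [Field k] (p : ℕ)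

/-- Free module on Hom(p, -). -/
noncomputable def freeP : FI ⥤ ModuleCat k :=
  coyoneda.obj (Opposite.op ⟨p⟩) ⋙ ModuleCat.free k

/-- The module of "p-element subsets". -/
noncomputable def subs : FI ⥤ ModuleCat k := cl p ⋙ ModuleCat.free k

open ModuleCat in
/-- Symmetrization map, component. -/
noncomputable def iotaApp (X : FI) : (subs k p).obj X ⟶ (freeP k p).obj X :=
  ModuleCat.freeDesc (↾Quotient.lift
    (fun g => ∑ σ : Equiv.Perm (Fin p), ModuleCat.freeMk (R := k) (σ.toEmbedding.trans g))
    (by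
      rintro g g' ⟨σ, rfl⟩
      erw [← Equiv.sum_comp (Equiv.mulLeft σ)]
      apply Finset.sum_congr rfl
      intro τ _
      rfl))

lemma iotaApp_mk (X : FI) (g : Fin p ↪ Fin X.n) :
    iotaApp k p X (ModuleCat.freeMk (Quotient.mk (pSetoid p X.n) g)) =
      ∑ σ : Equiv.Perm (Fin p), ModuleCat.freeMk (R := k) (σ.toEmbedding.trans g) := by
  exact ModuleCat.freeDesc_apply _ _

noncomputable def iota : subs k p ⟶ freeP k p where
  app X := iotaApp k p X
  naturality {X Y} f := by
    apply ModuleCat.free_hom_ext (X := (cl p).obj X)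
    intro q
    induction q using Quotient.inductionOn with
    | h g =>
      erw [ModuleCat.comp_apply, ModuleCat.comp_apply]
      dsimp only
      have h1 : ((subs k p).map f) (ModuleCat.freeMk (Quotient.mk (pSetoid p X.n) g)) =
          ModuleCat.freeMk (R := k) (Quotient.mk (pSetoid p Y.n) (g.trans f)) :=
        ModuleCat.free_map_apply _ _
      erw [h1, iotaApp_mk, iotaApp_mk, map_sum]
      apply Finset.sum_congr rfl
      intro σ _
      have h2 : ((freeP k p).map f) (ModuleCat.freeMk (R := k) (σ.toEmbedding.trans g)) =
          ModuleCat.freeMk (R := k) ((σ.toEmbedding.trans g).trans f) :=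
        ModuleCat.free_map_apply _ _
      rw [h2]
      rfl

/-- the unique map 0 → X -/
def toZero (X : FI) : (⟨0⟩ : FI) ⟶ X := ⟨Fin.elim0, fun x => x.elim0⟩

noncomputable def lam : subs k p ⟶ FI.free0 k where
  app X := ModuleCat.freeDesc (↾fun _ => ModuleCat.freeMk (R := k) (toZero X))
  naturality {X Y} f := by
    apply ModuleCat.free_hom_ext (X := (cl p).obj X)
    intro q
    erw [ModuleCat.comp_apply, ModuleCat.comp_apply]
    dsimp only
    induction q using Quotient.inductionOn with
    | h g =>
      have h1 : ((subs k p).map f) (ModuleCat.freeMk (Quotient.mk (pSetoid p X.n) g)) =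
          ModuleCat.freeMk (R := k) (Quotient.mk (pSetoid p Y.n) (g.trans f)) :=
        ModuleCat.free_map_apply _ _
      erw [h1, ModuleCat.freeDesc_apply, ModuleCat.freeDesc_apply]
      have h2 : ((FI.free0 k).map f) (ModuleCat.freeMk (R := k) (toZero X)) =
          ModuleCat.freeMk ((toZero X) ≫ f) :=
        ModuleCat.free_map_apply _ _
      erw [h2]
      exact congrArg (ModuleCat.freeMk (R := k)) (Subsingleton.elim (toZero Y) (toZero X ≫ f))

lemma lam_mk (X : FI) (q : (cl p).obj X) :
    (lam k p).app X (ModuleCat.freeMk q) = ModuleCat.freeMk (R := k) (toZero X) :=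
  ModuleCat.freeDesc_apply _ _

/-- pointwise retraction of `iotaApp` -/
noncomputable def retr (X : FI) : (freeP k p).obj X ⟶ (subs k p).obj X :=
  ModuleCat.freeDesc (↾fun g : Fin p ↪ Fin X.n =>
    if g = (Quotient.mk (pSetoid p X.n) g).out then
      ModuleCat.freeMk (R := k) (Quotient.mk (pSetoid p X.n) g) else 0)

lemma retr_iotaApp (X : FI) (x : (subs k p).obj X) :
    retr k p X (iotaApp k p X x) = x := by
  have : (iotaApp k p X) ≫ (retr k p X) = 𝟙 _ := by
    apply ModuleCat.free_hom_ext (X := (cl p).obj X)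
    intro q
    induction q using Quotient.inductionOn with
    | h g =>
      erw [ModuleCat.comp_apply]
      erw [iotaApp_mk, map_sum]
      have hterm : ∀ σ : Equiv.Perm (Fin p),
          retr k p X (ModuleCat.freeMk (σ.toEmbedding.trans g)) =
          if σ.toEmbedding.trans g = (Quotient.mk (pSetoid p X.n) g).out then
            ModuleCat.freeMk (R := k) (Quotient.mk (pSetoid p X.n) g) else 0 := by
        intro σ
        have hcl : Quotient.mk (pSetoid p X.n) (σ.toEmbedding.trans g) =
            Quotient.mk (pSetoid p X.n) g := Quotient.sound ((pSetoid p X.n).symm ⟨σ, rfl⟩)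
        have := ModuleCat.freeDesc_apply (M := (subs k p).obj X)
          (↾fun g' : Fin p ↪ Fin X.n =>
            if g' = (Quotient.mk (pSetoid p X.n) g').out then
              ModuleCat.freeMk (R := k) (Quotient.mk (pSetoid p X.n) g') else 0)
          (σ.toEmbedding.trans g)
        rw [retr]
        erw [this]
        erw [TypeCat.ofHom_apply, hcl]; rfl
      rw [Finset.sum_congr rfl (fun σ _ => hterm σ)]
      -- there is a unique σ with σ.toEmbedding.trans g = out
      obtain ⟨τ, hτ⟩ : ∃ τ : Equiv.Perm (Fin p),
          τ.toEmbedding.trans g = (Quotient.mk (pSetoid p X.n) g).out :=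
        (pSetoid p X.n).symm (Quotient.mk_out (s := pSetoid p X.n) g)
      erw [Finset.sum_eq_single τ]
      · rw [if_pos hτ]; rfl
      · intro b _ hb
        rw [if_neg]; rfl
        intro hbad
        apply hb
        ext x
        have : g (b x) = g (τ x) := by
          have := congrArg (fun (e : Fin p ↪ Fin X.n) => e x) (hbad.trans hτ.symm)
          simpa using this
        exact congrArg Fin.val (g.injective this)
      · intro hτmem
        exact absurd (Finset.mem_univ τ) hτmem
  have := congrArg (fun (φ : (subs k p).obj X ⟶ (subs k p).obj X) => φ x) this
  simpa using this

lemma iotaApp_injective (X : FI) : Function.Injective (iotaApp k p X) :=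
  Function.LeftInverse.injective (retr_iotaApp k p X)

instance iota_mono : Mono (iota k p) := by
  have : ∀ X : FI, Mono ((iota k p).app X) := by
    intro X
    rw [ModuleCat.mono_iff_injective]
    exact iotaApp_injective k p X
  exact NatTrans.mono_of_mono_app _

end FIAux

namespace FIAux

variable {k : Type} [Field k] {p : ℕ}

lemma free0_map_eq_id {X : FI} (f : X ⟶ X) : (FI.free0 k).map f = 𝟙 _ := by
  have h1 : ((coyoneda.obj (Opposite.op (⟨0⟩ : FI))).map f) = 𝟙 ((⟨0⟩ : FI) ⟶ X) :=
    by apply ConcreteCategory.hom_ext; intro g; exact Function.Embedding.ext fun (x : Fin 0) => x.elim0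
  show (ModuleCat.free k).map ((coyoneda.obj (Opposite.op (⟨0⟩ : FI))).map f) = _
  rw [h1]
  exact (ModuleCat.free k).map_id _

lemma const_on_basis (h : freeP k p ⟶ FI.free0 k) (f : (⟨p⟩ : FI) ⟶ (⟨p⟩ : FI)) :
    h.app ⟨p⟩ (ModuleCat.freeMk (R := k) f) =
      h.app ⟨p⟩ (ModuleCat.freeMk (R := k) (𝟙 (⟨p⟩ : FI))) := by
  have hnat := h.naturality f
  replace hnat := congrArg ModuleCat.Hom.hom hnat
  rw [ModuleCat.hom_comp, ModuleCat.hom_comp] at hnat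
  have happ := congrArg
    (fun φ : (freeP k p).obj ⟨p⟩ →ₗ[k] (FI.free0 k).obj ⟨p⟩ =>
      φ (ModuleCat.freeMk (R := k) (𝟙 (⟨p⟩ : FI)))) hnat
  beta_reduce at happ
  erw [LinearMap.comp_apply, LinearMap.comp_apply] at happ
  have h2 : ((freeP k p).map f) (ModuleCat.freeMk (R := k) (𝟙 (⟨p⟩ : FI))) =
      ModuleCat.freeMk (R := k) (𝟙 (⟨p⟩ : FI) ≫ f) :=
    ModuleCat.free_map_apply _ _
  rw [h2, Category.id_comp, free0_map_eq_id] at happ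
  erw [ModuleCat.id_apply] at happ
  exact happ

end FIAux


/-- **Proposition.** Let `k` be a field of characteristic `p > 0` and `C = FI`.
Then the `C`-module `kC e_0` is not an injective object of the abelian category of
`C`-modules. -/
theorem FI.free0_not_injective (k : Type) [Field k] (p : ℕ) [CharP k p] (hp : 0 < p) :
    ¬ Injective (FI.free0 k) := by
  intro hInj
  classical
  obtain ⟨h, hfac⟩ : ∃ h : FIAux.freeP k p ⟶ FI.free0 k,
      FIAux.iota k p ≫ h = FIAux.lam k p :=
    ⟨Injective.factorThru (FIAux.lam k p) (FIAux.iota k p), Injective.comp_factorThru _ _⟩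
  have happ := congrArg (fun (η : FIAux.subs k p ⟶ FI.free0 k) =>
    η.app ⟨p⟩ (ModuleCat.freeMk (R := k)
      (Quotient.mk (FIAux.pSetoid p p) (Function.Embedding.refl (Fin p))))) hfac
  simp only [NatTrans.comp_app] at happ
  erw [ModuleCat.comp_apply] at happ
  have e1 : (FIAux.lam k p).app ⟨p⟩ (ModuleCat.freeMk (R := k)
      (Quotient.mk (FIAux.pSetoid p p) (Function.Embedding.refl (Fin p)))) =
      ModuleCat.freeMk (R := k) (FIAux.toZero ⟨p⟩) := FIAux.lam_mk k p _ _
  have e2 : (FIAux.iota k p).app ⟨p⟩ (ModuleCat.freeMk (R := k)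
      (Quotient.mk (FIAux.pSetoid p p) (Function.Embedding.refl (Fin p)))) =
      ∑ σ : Equiv.Perm (Fin p),
        ModuleCat.freeMk (R := k) ((σ.toEmbedding).trans (Function.Embedding.refl (Fin p))) :=
    FIAux.iotaApp_mk k p _ _
  erw [e1, e2, map_sum] at happ
  have hconst : ∀ σ : Equiv.Perm (Fin p),
      h.app ⟨p⟩ (ModuleCat.freeMk (R := k)
        ((σ.toEmbedding).trans (Function.Embedding.refl (Fin p)))) =
      h.app ⟨p⟩ (ModuleCat.freeMk (R := k) (𝟙 (⟨p⟩ : FI))) := by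
    intro σ
    exact FIAux.const_on_basis h (show (⟨p⟩ : FI) ⟶ ⟨p⟩ from
      (σ.toEmbedding).trans (Function.Embedding.refl (Fin p)))
  rw [Finset.sum_congr rfl (fun σ _ => hconst σ), Finset.sum_const] at happ
  have hcard : (Finset.univ : Finset (Equiv.Perm (Fin p))).card = p.factorial := by
    simp [Fintype.card_perm]
  rw [hcard] at happ
  have hzero : (p.factorial : k) = 0 :=
    (CharP.cast_eq_zero_iff k p _).mpr (Nat.dvd_factorial hp le_rfl)
  have hsmul : (p.factorial) • (h.app ⟨p⟩ (ModuleCat.freeMk (R := k) (𝟙 (⟨p⟩ : FI)))) = 0 := by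
    rw [← Nat.cast_smul_eq_nsmul k, hzero, zero_smul]
  rw [hsmul] at happ
  exact one_ne_zero (Finsupp.single_eq_zero.mp happ.symm)
end

section
/- Let k be a commutative ring, G a finite group, and C = FI_G. For every n ≥ 1, the shifted free module S(kC e_n) is isomorphic, as a C-module, to the direct sum kC e_n ⊕ (kC e_{n-1})^{⊕ n·|G|}, where |G| is the order of G. (In particular, S(kC e_n) is a projective C-module generated in degrees ≤ n, i.e., ι is a genetic functor.) -/
open CategoryTheory CategoryTheory.Limits

attribute [local instance] CategoryTheory.Abelian.hasFiniteBiproducts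

/-- Objects of the category `FI_G`: natural numbers (bundled). -/
structure FIG (G : Type) where
  n : ℕ

variable {G : Type}

/-- The category `FI_G`: a morphism `X ⟶ Y` is a pair `(f, c)` where
`f : Fin X.n ↪ Fin Y.n` is an injective map and `c : Fin X.n → G` is arbitrary,
with composition `(f₂,c₂) ∘ (f₁,c₁) = (f₂ ∘ f₁, t ↦ c₂(f₁ t) * c₁ t)`. -/
instance FIG.category [Group G] : Category (FIG G) where
  Hom X Y := (Fin X.n ↪ Fin Y.n) × (Fin X.n → G)
  id X := ⟨Function.Embedding.refl _, fun _ => 1⟩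
  comp f g := ⟨f.1.trans g.1, fun t => g.2 (f.1 t) * f.2 t⟩
  id_comp f := Prod.ext rfl (funext fun t => mul_one _)
  comp_id f := Prod.ext rfl (funext fun t => one_mul _)
  assoc f g h := by
    refine Prod.ext rfl ?_
    funext t
    dsimp
    rw [mul_assoc]
    rfl

/-- The free `FI_G`-module `kC e_n`, sending `m` to the free `k`-module
on the hom-set `FI_G(n, m)`. -/
noncomputable def FIG.free (k : Type) [CommRing k] (G : Type) [Group G] (n : ℕ) :
    FIG G ⥤ ModuleCat k :=
  coyoneda.obj (Opposite.op ⟨n⟩) ⋙ ModuleCat.free k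

/-- An `FI_G`-module is finitely generated if it admits an epimorphism from a
finite direct sum `⨁ᵢ kC e_{nᵢ}` of free modules. -/
noncomputable def FIG.FinGen (k : Type) [CommRing k] [Group G]
    (V : FIG G ⥤ ModuleCat k) : Prop :=
  ∃ (r : ℕ) (a : Fin r → ℕ) (p : (⨁ fun i : Fin r => FIG.free k G (a i)) ⟶ V), Epi p

/-- An `FI_G`-module `V` is finite dimensional if each `V(m)` is a
finite-dimensional `k`-vector space and `V(m) = 0` for all but finitely many `m`. -/
def FIG.FinDim (k : Type) [Field k] [Group G] (V : FIG G ⥤ ModuleCat k) : Prop :=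
  (∀ X : FIG G, Module.Finite k (V.obj X)) ∧
    ∃ N : ℕ, ∀ X : FIG G, N < X.n → IsZero (V.obj X)

/-- An `FI_G`-module `F` is torsion-free if `Hom(T, F) = 0` for every
finite-dimensional `FI_G`-module `T`. -/
def FIG.TorsionFree (k : Type) [Field k] [Group G] (F : FIG G ⥤ ModuleCat k) : Prop :=
  ∀ T : FIG G ⥤ ModuleCat k, FIG.FinDim k T → ∀ f : T ⟶ F, f = 0

/-- Extension of an injection `f : Fin m ↪ Fin n` to `Fin (m+1) ↪ Fin (n+1)`,
sending `0 ↦ 0` and `t + 1 ↦ f t + 1`. -/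
def FIG.extEmb {m n : ℕ} (f : Fin m ↪ Fin n) : Fin (m + 1) ↪ Fin (n + 1) where
  toFun := Fin.cons 0 (fun t => (f t).succ)
  inj' := by
    intro a b h
    induction a using Fin.cases with
    | zero =>
      induction b using Fin.cases with
      | zero => rfl
      | succ j =>
        simp only [Fin.cons_zero, Fin.cons_succ] at h
        exact absurd h.symm (Fin.succ_ne_zero _)
    | succ i =>
      induction b using Fin.cases with
      | zero =>
        simp only [Fin.cons_zero, Fin.cons_succ] at h
        exact absurd h (Fin.succ_ne_zero _)
      | succ j =>
        simp only [Fin.cons_succ] at h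
        exact congrArg Fin.succ (f.injective (Fin.succ_injective _ h))

/-- The functor `ι : FI_G → FI_G`, `ι(n) = 1 ⊙ n`: on objects `n ↦ n + 1`, and on
a morphism `(f, c)` it gives `(f', c')` with `f' 0 = 0`, `c' 0 = 1`,
`f' (t+1) = f t + 1` and `c' (t+1) = c t`. -/
def FIG.iota (G : Type) [Group G] : FIG G ⥤ FIG G where
  obj X := ⟨X.n + 1⟩
  map f := ⟨FIG.extEmb f.1, Fin.cons 1 f.2⟩
  map_id X := by
    refine Prod.ext (DFunLike.ext _ _ fun t => ?_) (funext fun t => ?_) <;>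
      induction t using Fin.cases <;> rfl
  map_comp {X Y Z} f g := by
    refine Prod.ext (DFunLike.ext _ _ fun t => ?_) (funext fun t => ?_) <;>
      induction t using Fin.cases
    · rfl
    · rfl
    · exact (one_mul 1).symm
    · rfl

/-- The shift functor `S : V ↦ V ∘ ι` on `FI_G`-modules. -/
def FIG.S (k : Type) [CommRing k] (G : Type) [Group G] :
    (FIG G ⥤ ModuleCat k) ⥤ (FIG G ⥤ ModuleCat k) :=
  (Functor.whiskeringLeft (FIG G) (FIG G) (ModuleCat k)).obj (FIG.iota G)

----------------------------------------------------------------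
-- auxiliary development
----------------------------------------------------------------
namespace FIGaux

open FIG

variable {G : Type} [Group G]

theorem extEmb_eq_zero_iff {a b : ℕ} (f : Fin a ↪ Fin b) (x : Fin (a + 1)) :
    FIG.extEmb f x = 0 ↔ x = 0 := by
  induction x using Fin.cases with
  | zero => exact iff_of_true (Fin.cons_zero (α := fun _ => Fin (b + 1)) 0 (fun t => (f t).succ)) rfl
  | succ t =>
    simp only [FIG.extEmb, Function.Embedding.coeFn_mk, Fin.cons_succ]
    exact ⟨fun h => absurd h (Fin.succ_ne_zero _), fun h => absurd h (Fin.succ_ne_zero _)⟩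

theorem extEmb_apply_ne_zero {a b : ℕ} (f : Fin a ↪ Fin b) (x : Fin (a + 1)) (h : x ≠ 0) :
    FIG.extEmb f x = (f (x.pred h)).succ := by
  conv_lhs => rw [← Fin.succ_pred x h]
  rfl

/-- `upA`: compose with the inclusion missing `0`. -/
def upA {n : ℕ} {X : FIG G} (φ : (⟨n⟩ : FIG G) ⟶ X) : (⟨n⟩ : FIG G) ⟶ (⟨X.n + 1⟩ : FIG G) :=
  ⟨φ.1.trans ⟨Fin.succ, Fin.succ_injective _⟩, φ.2⟩

/-- `downA`: when `0` is missed, push down. -/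
def downA {n : ℕ} {X : FIG G} (φ : (⟨n⟩ : FIG G) ⟶ (⟨X.n + 1⟩ : FIG G))
    (h : ∀ t, φ.1 t ≠ 0) : (⟨n⟩ : FIG G) ⟶ X :=
  ⟨⟨fun t => (φ.1 t).pred (h t), fun a b hab => φ.1.injective (by
      rwa [Fin.pred_inj] at hab)⟩, φ.2⟩

theorem downA_upA {n : ℕ} {X : FIG G} (φ : (⟨n⟩ : FIG G) ⟶ X) (h : ∀ t, (upA φ).1 t ≠ 0) :
    downA (upA φ) h = φ := by
  refine Prod.ext (DFunLike.ext _ _ fun t => ?_) rfl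
  simp [downA, upA]

theorem upA_ne_zero {n : ℕ} {X : FIG G} (φ : (⟨n⟩ : FIG G) ⟶ X) (t : Fin n) :
    (upA φ).1 t ≠ 0 := Fin.succ_ne_zero _

theorem upA_downA {n : ℕ} {X : FIG G} (φ : (⟨n⟩ : FIG G) ⟶ (⟨X.n + 1⟩ : FIG G))
    (h : ∀ t, φ.1 t ≠ 0) : upA (downA φ h) = φ := by
  refine Prod.ext (DFunLike.ext _ _ fun t => ?_) rfl
  simp [downA, upA]
  exact Fin.succ_pred _ (h t)

/-- naturality of upA -/
theorem upA_comp {n : ℕ} {X Y : FIG G} (φ : (⟨n⟩ : FIG G) ⟶ X) (h : X ⟶ Y) :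
    upA (φ ≫ h) = upA φ ≫ (FIG.iota G).map h := by
  refine Prod.ext (DFunLike.ext _ _ fun t => ?_) (funext fun t => ?_)
  · show (h.1 (φ.1 t)).succ = FIG.extEmb h.1 ((φ.1 t).succ)
    rfl
  · show h.2 (φ.1 t) * φ.2 t = (Fin.cons 1 h.2 : Fin (X.n+1) → G) ((φ.1 t).succ) * φ.2 t
    rw [Fin.cons_succ]

/-- naturality of downA -/
theorem downA_comp {n : ℕ} {X Y : FIG G} (φ : (⟨n⟩ : FIG G) ⟶ (⟨X.n + 1⟩ : FIG G))
    (h : X ⟶ Y) (h1 : ∀ t, φ.1 t ≠ 0)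
    (h2 : ∀ t, ((φ ≫ (FIG.iota G).map h : (⟨n⟩ : FIG G) ⟶ (⟨Y.n + 1⟩ : FIG G))).1 t ≠ 0) :
    downA (φ ≫ (FIG.iota G).map h) h2 = downA φ h1 ≫ h := by
  refine Prod.ext (DFunLike.ext _ _ fun t => ?_) (funext fun t => ?_)
  · show ((FIG.extEmb h.1) (φ.1 t)).pred (h2 t) = h.1 ((φ.1 t).pred (h1 t))
    simp [extEmb_apply_ne_zero h.1 (φ.1 t) (h1 t)]
  · show (Fin.cons 1 h.2 : Fin (X.n+1) → G) (φ.1 t) * φ.2 t = h.2 ((φ.1 t).pred (h1 t)) * φ.2 t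
    conv_lhs => rw [← Fin.succ_pred (φ.1 t) (h1 t), Fin.cons_succ]

theorem comp_iota_ne_zero_iff {n : ℕ} {X Y : FIG G} (φ : (⟨n⟩ : FIG G) ⟶ (⟨X.n + 1⟩ : FIG G))
    (h : X ⟶ Y) (t : Fin n) :
    ((φ ≫ (FIG.iota G).map h : (⟨n⟩ : FIG G) ⟶ (⟨Y.n + 1⟩ : FIG G))).1 t ≠ 0 ↔ φ.1 t ≠ 0 := by
  show FIG.extEmb h.1 (φ.1 t) ≠ 0 ↔ _
  rw [ne_eq, extEmb_eq_zero_iff]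


/-- `upB i g φ`: insert position `i` mapping to `0` with color `g`. -/
def upB {m : ℕ} {X : FIG G} (i : Fin (m + 1)) (g : G) (φ : (⟨m⟩ : FIG G) ⟶ X) :
    (⟨m + 1⟩ : FIG G) ⟶ (⟨X.n + 1⟩ : FIG G) :=
  ⟨⟨i.insertNth 0 (fun t => (φ.1 t).succ), by
      intro a b hab
      by_cases ha : a = i <;> by_cases hb : b = i
      · rw [ha, hb]
      · obtain ⟨t, rfl⟩ := Fin.exists_succAbove_eq hb
        rw [ha, Fin.insertNth_apply_same, Fin.insertNth_apply_succAbove] at hab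
        exact absurd hab.symm (Fin.succ_ne_zero _)
      · obtain ⟨t, rfl⟩ := Fin.exists_succAbove_eq ha
        rw [hb, Fin.insertNth_apply_same, Fin.insertNth_apply_succAbove] at hab
        exact absurd hab (Fin.succ_ne_zero _)
      · obtain ⟨t, rfl⟩ := Fin.exists_succAbove_eq ha
        obtain ⟨s, rfl⟩ := Fin.exists_succAbove_eq hb
        rw [Fin.insertNth_apply_succAbove, Fin.insertNth_apply_succAbove] at hab
        exact congrArg i.succAbove (φ.1.injective (Fin.succ_injective _ hab))⟩,
    i.insertNth g φ.2⟩

theorem upB_fst_apply_same {m : ℕ} {X : FIG G} (i : Fin (m + 1)) (g : G)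
    (φ : (⟨m⟩ : FIG G) ⟶ X) : (upB i g φ).1 i = 0 := by
  have e : ⇑(upB i g φ).1 =
      i.insertNth (α := fun _ => Fin (X.n + 1)) 0 (fun t => (φ.1 t).succ) := rfl
  rw [e, Fin.insertNth_apply_same]

theorem upB_fst_apply_succAbove {m : ℕ} {X : FIG G} (i : Fin (m + 1)) (g : G)
    (φ : (⟨m⟩ : FIG G) ⟶ X) (t : Fin m) :
    (upB i g φ).1 (i.succAbove t) = (φ.1 t).succ := by
  have e : ⇑(upB i g φ).1 =
      i.insertNth (α := fun _ => Fin (X.n + 1)) 0 (fun t => (φ.1 t).succ) := rfl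
  rw [e, Fin.insertNth_apply_succAbove]

theorem upB_snd_apply_same {m : ℕ} {X : FIG G} (i : Fin (m + 1)) (g : G)
    (φ : (⟨m⟩ : FIG G) ⟶ X) : (upB i g φ).2 i = g := by
  have e : (upB i g φ).2 = i.insertNth (α := fun _ => G) g φ.2 := rfl
  rw [e, Fin.insertNth_apply_same]

theorem upB_snd_apply_succAbove {m : ℕ} {X : FIG G} (i : Fin (m + 1)) (g : G)
    (φ : (⟨m⟩ : FIG G) ⟶ X) (t : Fin m) :
    (upB i g φ).2 (i.succAbove t) = φ.2 t := by
  have e : (upB i g φ).2 = i.insertNth (α := fun _ => G) g φ.2 := rfl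
  rw [e, Fin.insertNth_apply_succAbove]

theorem succAbove_ne_zero_of_eq_zero {m : ℕ} {X : FIG G}
    (φ : (⟨m + 1⟩ : FIG G) ⟶ (⟨X.n + 1⟩ : FIG G)) {i : Fin (m + 1)} (h : φ.1 i = 0)
    (t : Fin m) : φ.1 (i.succAbove t) ≠ 0 := fun e =>
  Fin.succAbove_ne i t (φ.1.injective (e.trans h.symm))

/-- `downB i φ h`: remove position `i` (which maps to `0`). -/
def downB {m : ℕ} {X : FIG G} (i : Fin (m + 1))
    (φ : (⟨m + 1⟩ : FIG G) ⟶ (⟨X.n + 1⟩ : FIG G)) (h : φ.1 i = 0) :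
    (⟨m⟩ : FIG G) ⟶ X :=
  ⟨⟨fun t => (φ.1 (i.succAbove t)).pred (succAbove_ne_zero_of_eq_zero φ h t), by
      intro a b hab
      rw [Fin.pred_inj] at hab
      exact Fin.succAbove_right_injective (φ.1.injective hab)⟩,
    fun t => φ.2 (i.succAbove t)⟩

theorem downB_upB {m : ℕ} {X : FIG G} (i : Fin (m + 1)) (g : G) (φ : (⟨m⟩ : FIG G) ⟶ X)
    (h : (upB i g φ).1 i = 0) : downB i (upB i g φ) h = φ := by
  refine Prod.ext (DFunLike.ext _ _ fun t => ?_) (funext fun t => ?_)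
  · show ((upB i g φ).1 (i.succAbove t)).pred
      (succAbove_ne_zero_of_eq_zero (upB i g φ) h t) = φ.1 t
    refine Fin.succ_injective _ ?_
    rw [Fin.succ_pred, upB_fst_apply_succAbove]
  · exact upB_snd_apply_succAbove i g φ t

theorem upB_downB {m : ℕ} {X : FIG G} (i : Fin (m + 1))
    (φ : (⟨m + 1⟩ : FIG G) ⟶ (⟨X.n + 1⟩ : FIG G)) (h : φ.1 i = 0) :
    upB i (φ.2 i) (downB i φ h) = φ := by
  refine Prod.ext (DFunLike.ext _ _ fun x => ?_) (funext fun x => ?_)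
  · by_cases hx : x = i
    · rw [hx, upB_fst_apply_same, h]
    · obtain ⟨t, rfl⟩ := Fin.exists_succAbove_eq hx
      rw [upB_fst_apply_succAbove]
      exact Fin.succ_pred _ (succAbove_ne_zero_of_eq_zero φ h t)
  · by_cases hx : x = i
    · rw [hx]; exact upB_snd_apply_same _ _ _
    · obtain ⟨t, rfl⟩ := Fin.exists_succAbove_eq hx
      exact upB_snd_apply_succAbove _ _ _ t

theorem upB_eq_zero_iff {m : ℕ} {X : FIG G} (i : Fin (m + 1)) (g : G)
    (φ : (⟨m⟩ : FIG G) ⟶ X) (j : Fin (m + 1)) : (upB i g φ).1 j = 0 ↔ j = i := by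
  constructor
  · intro hj
    exact (upB i g φ).1.injective (hj.trans (upB_fst_apply_same i g φ).symm)
  · rintro rfl; exact upB_fst_apply_same _ _ _

/-- naturality of `upB` -/
theorem upB_comp {m : ℕ} {X Y : FIG G} (i : Fin (m + 1)) (g : G) (φ : (⟨m⟩ : FIG G) ⟶ X)
    (h : X ⟶ Y) : upB i g (φ ≫ h) = upB i g φ ≫ (FIG.iota G).map h := by
  refine Prod.ext (DFunLike.ext _ _ fun x => ?_) (funext fun x => ?_)
  · show _ = FIG.extEmb h.1 ((upB i g φ).1 x)
    by_cases hx : x = i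
    · subst hx
      rw [upB_fst_apply_same, upB_fst_apply_same]
      rfl
    · obtain ⟨t, rfl⟩ := Fin.exists_succAbove_eq hx
      rw [upB_fst_apply_succAbove, upB_fst_apply_succAbove]
      rfl
  · show _ = (Fin.cons 1 h.2 : Fin (X.n + 1) → G) ((upB i g φ).1 x) * (upB i g φ).2 x
    by_cases hx : x = i
    · subst hx
      rw [upB_snd_apply_same, upB_fst_apply_same, upB_snd_apply_same, Fin.cons_zero, one_mul]
    · obtain ⟨t, rfl⟩ := Fin.exists_succAbove_eq hx
      rw [upB_snd_apply_succAbove, upB_fst_apply_succAbove, upB_snd_apply_succAbove,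
        Fin.cons_succ]
      rfl

/-- the zero-hitting condition is preserved by postcomposition with `ι h` -/
theorem comp_iota_eq_zero_iff {m : ℕ} {X Y : FIG G}
    (φ : (⟨m + 1⟩ : FIG G) ⟶ (⟨X.n + 1⟩ : FIG G)) (h : X ⟶ Y) (i : Fin (m + 1)) :
    ((φ ≫ (FIG.iota G).map h : (⟨m + 1⟩ : FIG G) ⟶ (⟨Y.n + 1⟩ : FIG G))).1 i = 0 ↔
      φ.1 i = 0 := by
  show FIG.extEmb h.1 (φ.1 i) = 0 ↔ _
  rw [extEmb_eq_zero_iff]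

theorem comp_iota_snd_of_eq_zero {m : ℕ} {X Y : FIG G}
    (φ : (⟨m + 1⟩ : FIG G) ⟶ (⟨X.n + 1⟩ : FIG G)) (h : X ⟶ Y) (i : Fin (m + 1))
    (hi : φ.1 i = 0) :
    ((φ ≫ (FIG.iota G).map h : (⟨m + 1⟩ : FIG G) ⟶ (⟨Y.n + 1⟩ : FIG G))).2 i = φ.2 i := by
  show (Fin.cons 1 h.2 : Fin (X.n + 1) → G) (φ.1 i) * φ.2 i = φ.2 i
  rw [hi, Fin.cons_zero, one_mul]

/-- naturality of `downB` -/
theorem downB_comp {m : ℕ} {X Y : FIG G} (i : Fin (m + 1))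
    (φ : (⟨m + 1⟩ : FIG G) ⟶ (⟨X.n + 1⟩ : FIG G)) (h : X ⟶ Y) (h1 : φ.1 i = 0)
    (h2 : ((φ ≫ (FIG.iota G).map h : (⟨m + 1⟩ : FIG G) ⟶ (⟨Y.n + 1⟩ : FIG G))).1 i = 0) :
    downB i (φ ≫ (FIG.iota G).map h) h2 = downB i φ h1 ≫ h := by
  refine Prod.ext (DFunLike.ext _ _ fun t => ?_) (funext fun t => ?_)
  · show (FIG.extEmb h.1 (φ.1 (i.succAbove t))).pred
      (succAbove_ne_zero_of_eq_zero (φ ≫ (FIG.iota G).map h) h2 t) =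
      h.1 ((φ.1 (i.succAbove t)).pred (succAbove_ne_zero_of_eq_zero φ h1 t))
    simp [extEmb_apply_ne_zero h.1 _ (succAbove_ne_zero_of_eq_zero φ h1 t)]
  · show (Fin.cons 1 h.2 : Fin (X.n + 1) → G) (φ.1 (i.succAbove t)) * φ.2 (i.succAbove t) =
      h.2 ((φ.1 (i.succAbove t)).pred (succAbove_ne_zero_of_eq_zero φ h1 t)) *
        φ.2 (i.succAbove t)
    conv_lhs => rw [← Fin.succ_pred (φ.1 (i.succAbove t))
      (succAbove_ne_zero_of_eq_zero φ h1 t), Fin.cons_succ]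


----------------------------------------------------------------
-- module layer
----------------------------------------------------------------

open scoped Classical

variable (k : Type) [CommRing k]

theorem free_map_apply' (n : ℕ) {X Y : FIG G} (h : X ⟶ Y) (ψ : (⟨n⟩ : FIG G) ⟶ X) :
    (FIG.free k G n).map h (ModuleCat.freeMk (R := k) ψ) = ModuleCat.freeMk (R := k) (ψ ≫ h) :=
  ModuleCat.free_map_apply _ _

theorem S_free_map_apply (n : ℕ) {X Y : FIG G} (h : X ⟶ Y)
    (φ : (⟨n⟩ : FIG G) ⟶ (⟨X.n + 1⟩ : FIG G)) :
    ((FIG.S k G).obj (FIG.free k G n)).map h (ModuleCat.freeMk (R := k) φ) =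
      ModuleCat.freeMk (R := k) (φ ≫ (FIG.iota G).map h) :=
  ModuleCat.free_map_apply _ _

/-- the natural transformation `S(kC e_n) ⟶ kC e_n`. -/
noncomputable def alphaDown (n : ℕ) : (FIG.S k G).obj (FIG.free k G n) ⟶ FIG.free k G n where
  app X := ModuleCat.freeDesc (TypeCat.ofHom fun φ : (⟨n⟩ : FIG G) ⟶ (⟨X.n + 1⟩ : FIG G) =>
    if h : ∀ t, φ.1 t ≠ 0 then ModuleCat.freeMk (R := k) (downA φ h) else 0)
  naturality X Y h := by
    refine ModuleCat.free_hom_ext fun (φ : (⟨n⟩ : FIG G) ⟶ (⟨X.n + 1⟩ : FIG G)) => ?_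
    erw [comp_apply, comp_apply, S_free_map_apply, ModuleCat.freeDesc_apply,
      ModuleCat.freeDesc_apply]
    simp only [ConcreteCategory.hom_ofHom]
    erw [TypeCat.Fun.mk_apply _ (φ ≫ _), TypeCat.Fun.mk_apply _ φ]
    by_cases hφ : ∀ t, φ.1 t ≠ (0 : Fin (X.n + 1))
    · erw [dif_pos hφ, dif_pos fun t => (comp_iota_ne_zero_iff φ h t).mpr (hφ t),
        downA_comp φ h hφ, free_map_apply']
    · have hc : ¬ ∀ t, ((φ ≫ (FIG.iota G).map h :
          (⟨n⟩ : FIG G) ⟶ (⟨Y.n + 1⟩ : FIG G))).1 t ≠ 0 := fun hc =>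
        hφ fun t => (comp_iota_ne_zero_iff φ h t).mp (hc t)
      erw [dif_neg hφ, dif_neg hc, LinearMap.map_zero]

/-- the natural transformation `kC e_n ⟶ S(kC e_n)`. -/
noncomputable def alphaUp (n : ℕ) : FIG.free k G n ⟶ (FIG.S k G).obj (FIG.free k G n) where
  app X := ModuleCat.freeDesc (TypeCat.ofHom fun ψ : (⟨n⟩ : FIG G) ⟶ X =>
    (ModuleCat.freeMk (R := k) (upA ψ) : ((FIG.S k G).obj (FIG.free k G n)).obj X))
  naturality X Y h := by
    refine ModuleCat.free_hom_ext fun ψ => ?_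
    erw [comp_apply, comp_apply, free_map_apply', ModuleCat.freeDesc_apply,
      ModuleCat.freeDesc_apply, S_free_map_apply]
    simp only [ConcreteCategory.hom_ofHom]
    erw [TypeCat.Fun.mk_apply]
    rw [upA_comp]

/-- the natural transformation `S(kC e_{m+1}) ⟶ kC e_m` for position `i`, color `g`. -/
noncomputable def gammaDown (m : ℕ) (i : Fin (m + 1)) (g : G) :
    (FIG.S k G).obj (FIG.free k G (m + 1)) ⟶ FIG.free k G m where
  app X := ModuleCat.freeDesc (TypeCat.ofHom fun φ : (⟨m + 1⟩ : FIG G) ⟶ (⟨X.n + 1⟩ : FIG G) =>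
    if h : φ.1 i = 0 ∧ φ.2 i = g then ModuleCat.freeMk (R := k) (downB i φ h.1) else 0)
  naturality X Y h := by
    refine ModuleCat.free_hom_ext fun (φ : (⟨m + 1⟩ : FIG G) ⟶ (⟨X.n + 1⟩ : FIG G)) => ?_
    erw [comp_apply, comp_apply, S_free_map_apply, ModuleCat.freeDesc_apply,
      ModuleCat.freeDesc_apply]
    simp only [ConcreteCategory.hom_ofHom]
    erw [TypeCat.Fun.mk_apply _ (φ ≫ _), TypeCat.Fun.mk_apply _ φ]
    by_cases hφ : φ.1 i = (0 : Fin (X.n + 1)) ∧ φ.2 i = g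
    · erw [dif_pos hφ, dif_pos ⟨(comp_iota_eq_zero_iff φ h i).mpr hφ.1,
        (comp_iota_snd_of_eq_zero φ h i hφ.1).trans hφ.2⟩,
        downB_comp i φ h hφ.1, free_map_apply']
    · have hc : ¬ (((φ ≫ (FIG.iota G).map h :
          (⟨m + 1⟩ : FIG G) ⟶ (⟨Y.n + 1⟩ : FIG G))).1 i = 0 ∧
          ((φ ≫ (FIG.iota G).map h :
          (⟨m + 1⟩ : FIG G) ⟶ (⟨Y.n + 1⟩ : FIG G))).2 i = g) := fun hc =>
        hφ ⟨(comp_iota_eq_zero_iff φ h i).mp hc.1,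
          ((comp_iota_snd_of_eq_zero φ h i ((comp_iota_eq_zero_iff φ h i).mp hc.1)).symm.trans
            hc.2)⟩
      erw [dif_neg hφ, dif_neg hc, LinearMap.map_zero]

/-- the natural transformation `kC e_m ⟶ S(kC e_{m+1})` for position `i`, color `g`. -/
noncomputable def gammaUp (m : ℕ) (i : Fin (m + 1)) (g : G) :
    FIG.free k G m ⟶ (FIG.S k G).obj (FIG.free k G (m + 1)) where
  app X := ModuleCat.freeDesc (TypeCat.ofHom fun ψ : (⟨m⟩ : FIG G) ⟶ X =>
    (ModuleCat.freeMk (R := k) (upB i g ψ) : ((FIG.S k G).obj (FIG.free k G (m + 1))).obj X))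
  naturality X Y h := by
    refine ModuleCat.free_hom_ext fun ψ => ?_
    erw [comp_apply, comp_apply, free_map_apply', ModuleCat.freeDesc_apply,
      ModuleCat.freeDesc_apply, S_free_map_apply]
    simp only [ConcreteCategory.hom_ofHom]
    erw [TypeCat.Fun.mk_apply]
    rw [upB_comp]


----------------------------------------------------------------
-- composition identities
----------------------------------------------------------------

theorem mcomp_apply {M N P : ModuleCat k} (f : M ⟶ N) (g : N ⟶ P) (x : M) :
    (f ≫ g) x = g (f x) := rfl

/-- ext for maps out of `(free k G n).obj X` with nicely-typed basis elements -/
theorem free_ext (n : ℕ) {X : FIG G} {M : ModuleCat k}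
    {f g : (FIG.free k G n).obj X ⟶ M}
    (h : ∀ ψ : (⟨n⟩ : FIG G) ⟶ X, f (ModuleCat.freeMk (R := k) ψ) = g (ModuleCat.freeMk (R := k) ψ)) :
    f = g :=
  ModuleCat.free_hom_ext h

/-- ext for maps out of `(S (free k G n)).obj X` with nicely-typed basis elements -/
theorem S_free_ext (n : ℕ) {X : FIG G} {M : ModuleCat k}
    {f g : ((FIG.S k G).obj (FIG.free k G n)).obj X ⟶ M}
    (h : ∀ φ : (⟨n⟩ : FIG G) ⟶ (⟨X.n + 1⟩ : FIG G),
      f (ModuleCat.freeMk (R := k) φ) = g (ModuleCat.freeMk (R := k) φ)) :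
    f = g :=
  ModuleCat.free_hom_ext h

theorem alphaDown_app_apply (n : ℕ) {X : FIG G}
    (φ : (⟨n⟩ : FIG G) ⟶ (⟨X.n + 1⟩ : FIG G)) :
    (alphaDown k n).app X (ModuleCat.freeMk (R := k) φ) =
      if h : ∀ t, φ.1 t ≠ 0 then ModuleCat.freeMk (R := k) (downA φ h) else 0 :=
  ModuleCat.freeDesc_apply _ _

theorem alphaUp_app_apply (n : ℕ) {X : FIG G} (ψ : (⟨n⟩ : FIG G) ⟶ X) :
    (alphaUp k n).app X (ModuleCat.freeMk (R := k) ψ) =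
      (ModuleCat.freeMk (R := k) (upA ψ) : ((FIG.S k G).obj (FIG.free k G n)).obj X) :=
  ModuleCat.freeDesc_apply _ _

theorem gammaDown_app_apply (m : ℕ) (i : Fin (m + 1)) (g : G) {X : FIG G}
    (φ : (⟨m + 1⟩ : FIG G) ⟶ (⟨X.n + 1⟩ : FIG G)) :
    (gammaDown k m i g).app X (ModuleCat.freeMk (R := k) φ) =
      if h : φ.1 i = 0 ∧ φ.2 i = g then ModuleCat.freeMk (R := k) (downB i φ h.1) else 0 :=
  ModuleCat.freeDesc_apply _ _

theorem gammaUp_app_apply (m : ℕ) (i : Fin (m + 1)) (g : G) {X : FIG G}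
    (ψ : (⟨m⟩ : FIG G) ⟶ X) :
    (gammaUp k m i g).app X (ModuleCat.freeMk (R := k) ψ) =
      (ModuleCat.freeMk (R := k) (upB i g ψ) : ((FIG.S k G).obj (FIG.free k G (m + 1))).obj X) :=
  ModuleCat.freeDesc_apply _ _

theorem upDownA (n : ℕ) : alphaUp k (G := G) n ≫ alphaDown k n = 𝟙 (FIG.free k G n) := by
  apply NatTrans.ext; funext X
  refine free_ext k n fun ψ => ?_
  erw [NatTrans.comp_app, mcomp_apply]
  rw [alphaUp_app_apply, alphaDown_app_apply,
    dif_pos (upA_ne_zero ψ), downA_upA]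
  rfl

theorem upA_downB (m : ℕ) (i : Fin (m + 1)) (g : G) :
    alphaUp k (G := G) (m + 1) ≫ gammaDown k m i g = 0 := by
  apply NatTrans.ext; funext X
  refine free_ext k (m + 1) fun ψ => ?_
  erw [NatTrans.comp_app, mcomp_apply]
  rw [alphaUp_app_apply, gammaDown_app_apply,
    dif_neg (fun hc => (upA_ne_zero ψ i) hc.1)]
  rfl

theorem upB_downA (m : ℕ) (i : Fin (m + 1)) (g : G) :
    gammaUp k (G := G) m i g ≫ alphaDown k (m + 1) = 0 := by
  apply NatTrans.ext; funext X
  refine free_ext k m fun ψ => ?_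
  erw [NatTrans.comp_app, mcomp_apply]
  rw [gammaUp_app_apply, alphaDown_app_apply,
    dif_neg (fun hc => hc i (upB_fst_apply_same i g ψ))]
  rfl

theorem upB_downB_eq (m : ℕ) (i : Fin (m + 1)) (g : G) :
    gammaUp k (G := G) m i g ≫ gammaDown k m i g = 𝟙 (FIG.free k G m) := by
  apply NatTrans.ext; funext X
  refine free_ext k m fun ψ => ?_
  erw [NatTrans.comp_app, mcomp_apply]
  rw [gammaUp_app_apply, gammaDown_app_apply,
    dif_pos ⟨upB_fst_apply_same i g ψ, upB_snd_apply_same i g ψ⟩, downB_upB]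
  rfl

theorem upB_downB_ne (m : ℕ) (i j : Fin (m + 1)) (g h : G) (hij : (i, g) ≠ (j, h)) :
    gammaUp k (G := G) m i g ≫ gammaDown k m j h = 0 := by
  apply NatTrans.ext; funext X
  refine free_ext k m fun ψ => ?_
  erw [NatTrans.comp_app, mcomp_apply]
  rw [gammaUp_app_apply, gammaDown_app_apply, dif_neg]
  · rfl
  · rintro ⟨h1, h2⟩
    have hji : j = i := (upB_eq_zero_iff i g ψ j).mp h1
    subst hji
    rw [upB_snd_apply_same] at h2
    exact hij (by rw [h2])

theorem alpha_pair_apply (n : ℕ) {X : FIG G} (φ : (⟨n⟩ : FIG G) ⟶ (⟨X.n + 1⟩ : FIG G)) :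
    (alphaDown k n ≫ alphaUp k n).app X (ModuleCat.freeMk (R := k) φ) =
      if ∀ t, φ.1 t ≠ 0 then
        (ModuleCat.freeMk (R := k) φ : ((FIG.S k G).obj (FIG.free k G n)).obj X) else 0 := by
  erw [NatTrans.comp_app, mcomp_apply]
  rw [alphaDown_app_apply]
  by_cases hc : ∀ t, φ.1 t ≠ (0 : Fin (X.n + 1))
  · rw [dif_pos hc, if_pos hc, alphaUp_app_apply, upA_downA]
  · rw [dif_neg hc, if_neg hc]
    exact LinearMap.map_zero _

theorem gamma_pair_apply (m : ℕ) (i : Fin (m + 1)) (g : G) {X : FIG G}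
    (φ : (⟨m + 1⟩ : FIG G) ⟶ (⟨X.n + 1⟩ : FIG G)) :
    (gammaDown k m i g ≫ gammaUp k m i g).app X (ModuleCat.freeMk (R := k) φ) =
      if φ.1 i = 0 ∧ φ.2 i = g then
        (ModuleCat.freeMk (R := k) φ : ((FIG.S k G).obj (FIG.free k G (m + 1))).obj X) else 0 := by
  erw [NatTrans.comp_app, mcomp_apply]
  rw [gammaDown_app_apply]
  by_cases hc : φ.1 i = (0 : Fin (X.n + 1)) ∧ φ.2 i = g
  · obtain ⟨h1, h2⟩ := hc
    rw [dif_pos ⟨h1, h2⟩, if_pos ⟨h1, h2⟩, gammaUp_app_apply]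
    subst h2
    exact congrArg _ (upB_downB i φ h1)
  · rw [dif_neg hc, if_neg hc]
    exact LinearMap.map_zero _

theorem sum_identity (m : ℕ) {ι : Type} [Fintype ι] (e : ι ≃ Fin (m + 1) × G) :
    alphaDown k (m + 1) ≫ alphaUp k (m + 1) +
      ∑ a : ι, gammaDown k m (e a).1 (e a).2 ≫ gammaUp k m (e a).1 (e a).2 =
    𝟙 ((FIG.S k G).obj (FIG.free k G (m + 1))) := by
  apply NatTrans.ext; funext X
  refine S_free_ext k (m + 1) fun φ => ?_
  rw [NatTrans.app_add, NatTrans.app_sum]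
  erw [LinearMap.add_apply, ModuleCat.hom_sum, LinearMap.sum_apply]
  rw [alpha_pair_apply]
  by_cases hφ : ∀ t, φ.1 t ≠ (0 : Fin (X.n + 1))
  · rw [if_pos hφ]
    have hz : ∀ a : ι, (gammaDown k m (e a).1 (e a).2 ≫ gammaUp k m (e a).1 (e a).2).app X
        (ModuleCat.freeMk (R := k) φ) = 0 := fun a => by
      rw [gamma_pair_apply, if_neg (fun hc => hφ (e a).1 hc.1)]
      rfl
    rw [Finset.sum_congr rfl fun a _ => hz a, Finset.sum_const_zero]
    erw [add_zero]
    rfl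
  · rw [if_neg hφ]
    erw [zero_add]
    push_neg at hφ
    obtain ⟨i, hi⟩ := hφ
    have key : ∀ a : ι, (gammaDown k m (e a).1 (e a).2 ≫ gammaUp k m (e a).1 (e a).2).app X
        (ModuleCat.freeMk (R := k) φ) =
        if a = e.symm (i, φ.2 i) then
          (ModuleCat.freeMk (R := k) φ : ((FIG.S k G).obj (FIG.free k G (m + 1))).obj X) else 0 := by
      intro a
      rw [gamma_pair_apply]
      refine if_congr ?_ rfl rfl
      constructor
      · rintro ⟨h1, h2⟩
        have hai : (e a).1 = i := φ.1.injective (h1.trans hi.symm)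
        rw [Equiv.eq_symm_apply]
        refine Prod.ext hai ?_
        rw [← h2, hai]
      · intro ha
        have hea : e a = (i, φ.2 i) := by rw [ha, Equiv.apply_symm_apply]
        rw [hea]
        exact ⟨hi, rfl⟩
    rw [Finset.sum_congr rfl fun a _ => key a]
    exact (Finset.sum_ite_eq' Finset.univ (e.symm (i, φ.2 i))
        (fun _ => (ModuleCat.freeMk (R := k) φ : ((FIG.S k G).obj (FIG.free k G (m + 1))).obj X))).trans
      (if_pos (Finset.mem_univ _))

end FIGaux


/-- **Proposition (ι is a genetic functor for `FI_G`).**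
Let `k` be a commutative ring, `G` a finite group and `C = FI_G`. For every `n ≥ 1`,
the shifted free module `S(kC e_n)` is isomorphic, as a `C`-module, to
`kC e_n ⊕ (kC e_{n-1})^{⊕ n·|G|}`. -/
theorem FIG.shift_of_free (k : Type) [CommRing k] (G : Type) [Group G] [Finite G]
    (n : ℕ) (hn : 1 ≤ n) :
    Nonempty ((FIG.S k G).obj (FIG.free k G n) ≅
      FIG.free k G n ⊞ (⨁ fun _ : Fin (n * Nat.card G) => FIG.free k G (n - 1))) := by
  obtain ⟨m, rfl⟩ : ∃ m, n = m + 1 := ⟨n - 1, (Nat.succ_pred_eq_of_pos hn).symm⟩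
  have e : Fin ((m + 1) * Nat.card G) ≃ Fin (m + 1) × G :=
    finProdFinEquiv.symm.trans ((Equiv.refl (Fin (m + 1))).prodCongr (Finite.equivFin G).symm)
  simp only [Nat.add_sub_cancel]
  exact ⟨{
    hom := biprod.lift (FIGaux.alphaDown k (m + 1))
      (biproduct.lift fun a => FIGaux.gammaDown k m (e a).1 (e a).2)
    inv := biprod.desc (FIGaux.alphaUp k (m + 1))
      (biproduct.desc fun a => FIGaux.gammaUp k m (e a).1 (e a).2)
    hom_inv_id := by
      rw [biprod.lift_desc, biproduct.lift_desc]
      exact FIGaux.sum_identity k m e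
    inv_hom_id := by
      apply biprod.hom_ext'
      · rw [Category.comp_id, ← Category.assoc, biprod.inl_desc]
        apply biprod.hom_ext
        · rw [Category.assoc, biprod.lift_fst, biprod.inl_fst, FIGaux.upDownA]
        · rw [Category.assoc, biprod.lift_snd, biprod.inl_snd]
          apply biproduct.hom_ext
          intro b
          rw [Category.assoc, biproduct.lift_π, zero_comp, FIGaux.upA_downB]
      · rw [Category.comp_id, ← Category.assoc, biprod.inr_desc]
        apply biproduct.hom_ext'
        intro a
        rw [← Category.assoc, biproduct.ι_desc]
        apply biprod.hom_ext
        · rw [Category.assoc, biprod.lift_fst, Category.assoc, biprod.inr_fst, comp_zero,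
            FIGaux.upB_downA]
        · rw [Category.assoc, biprod.lift_snd, Category.assoc, biprod.inr_snd, Category.comp_id]
          apply biproduct.hom_ext
          intro b
          rw [Category.assoc, biproduct.lift_π, biproduct.ι_π]
          by_cases hab : a = b
          · subst hab
            rw [dif_pos rfl, eqToHom_refl]
            exact FIGaux.upB_downB_eq k m _ _
          · rw [dif_neg hab]
            exact FIGaux.upB_downB_ne k m _ _ _ _ fun hpair => hab (e.injective hpair) }⟩
end
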